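/- arXiv:2303.00878 — 8 statements merged into one kernel-verified Lean document; each statement's English description precedes it below -/
import Mathlib

section
/- Let p_1, …, p_n be a point sequence in ℝ² in general position. Then |α_T| ∈ O(n·|T|); concretely, for each edge e occurring as an edge of a triangle of T there exists a finite partition of the α-edge activity space L^α_e into cuboids such that the total number of cuboids over all such edges is at most 3·(n−1)·|T|. -/
open Metric

noncomputable abbrev Pt : Type := EuclideanSpace ℝ (Fin 2)

/-- The points `p 1, …, p n` are in general position: pairwise distinct, no three
collinear, no four cocircular. -/
def GenPos (n : ℕ) (p : ℕ → Pt) : Prop :=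
  (∀ i j : ℕ, 1 ≤ i → i ≤ n → 1 ≤ j → j ≤ n → i ≠ j → p i ≠ p j) ∧
  (∀ a b c : ℕ, 1 ≤ a → a ≤ n → 1 ≤ b → b ≤ n → 1 ≤ c → c ≤ n →
    a ≠ b → a ≠ c → b ≠ c → ¬ Collinear ℝ ({p a, p b, p c} : Set Pt)) ∧
  (∀ a b c d : ℕ, 1 ≤ a → a ≤ n → 1 ≤ b → b ≤ n → 1 ≤ c → c ≤ n → 1 ≤ d → d ≤ n →
    a ≠ b → a ≠ c → a ≠ d → b ≠ c → b ≠ d → c ≠ d →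
    ¬ ∃ (o : Pt) (r : ℝ),
        dist o (p a) = r ∧ dist o (p b) = r ∧ dist o (p c) = r ∧ dist o (p d) = r)

/-- `t` (a set of vertex indices) is a (possibly degenerate) Delaunay triangle of the time
window `P_{i,j}`. A proper triangle (`card t = 3`) must have its open circumdisk empty of
the points of the window; a degenerate triangle / hull facet (`card t = 2`) must have all
other points of the window strictly on one side of the line through its two vertices. -/
def IsDelaunayTriangle (n : ℕ) (p : ℕ → Pt) (i j : ℕ) (t : Finset ℕ) : Prop :=
  1 ≤ i ∧ i ≤ j ∧ j ≤ n ∧ (∀ k ∈ t, i ≤ k ∧ k ≤ j) ∧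
  ((t.card = 3 ∧ ∃ (o : Pt) (r : ℝ), (∀ k ∈ t, dist o (p k) = r) ∧
      ∀ m : ℕ, i ≤ m → m ≤ j → r ≤ dist o (p m)) ∨
   (t.card = 2 ∧ ∃ u : Pt, ‖u‖ = 1 ∧ (∀ k ∈ t, ∀ l ∈ t, (inner ℝ u (p k - p l) : ℝ) = 0) ∧
      ∀ k ∈ t, ∀ m : ℕ, i ≤ m → m ≤ j → m ∉ t → (inner ℝ (p m - p k) u : ℝ) < 0))

/-- `T`: the set of all (possibly degenerate) Delaunay triangles over all time windows. -/
def TriSet (n : ℕ) (p : ℕ → Pt) : Set (Finset ℕ) :=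
  {t | ∃ i j : ℕ, IsDelaunayTriangle n p i j t}

/-- The edges occurring as an edge of some triangle of `T`. -/
def EdgeSet (n : ℕ) (p : ℕ → Pt) : Set (Finset ℕ) :=
  {e | e.card = 2 ∧ ∃ t ∈ TriSet n p, e ⊆ t}

/-- The `α`-edge activity space `L^α_e` of the edge `e`: all triples `(i, j, α)` such that
`1 ≤ i ≤ min e`, `max e ≤ j ≤ n`, `α > 0`, and there is an open disk of radius `α` with the
two vertices of `e` on its boundary containing no point of `P_{i,j}`. -/
def ActivitySpace (n : ℕ) (p : ℕ → Pt) (e : Finset ℕ) : Set (ℕ × ℕ × ℝ) :=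
  {x | 1 ≤ x.1 ∧ x.2.1 ≤ n ∧ (∀ k ∈ e, x.1 ≤ k ∧ k ≤ x.2.1) ∧ 0 < x.2.2 ∧
    ∃ c : Pt, (∀ k ∈ e, dist c (p k) = x.2.2) ∧
      ∀ m : ℕ, x.1 ≤ m → m ≤ x.2.1 → x.2.2 ≤ dist c (p m)}

/-- A cuboid: a product of an integer interval, an integer interval, and a real interval. -/
def IsCuboid (S : Set (ℕ × ℕ × ℝ)) : Prop :=
  ∃ (I₁ I₂ : Set ℕ) (I₃ : Set ℝ), I₁.OrdConnected ∧ I₂.OrdConnected ∧ I₃.OrdConnected ∧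
    S = I₁ ×ˢ (I₂ ×ˢ I₃)

/-- `F` is a finite partition of `L` into cuboids. -/
def IsCuboidPartition (F : Finset (Set (ℕ × ℕ × ℝ))) (L : Set (ℕ × ℕ × ℝ)) : Prop :=
  (∀ S ∈ F, IsCuboid S) ∧
  (F : Set (Set (ℕ × ℕ × ℝ))).Pairwise Disjoint ∧
  ⋃₀ (F : Set (Set (ℕ × ℕ × ℝ))) = L

namespace Stmt0
noncomputable def mk2 (x y : ℝ) : Pt := (WithLp.equiv 2 (Fin 2 → ℝ)).symm ![x, y]
@[simp] lemma mk2_zero (x y : ℝ) : mk2 x y 0 = x := by simp [mk2]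
@[simp] lemma mk2_one (x y : ℝ) : mk2 x y 1 = y := by simp [mk2]
lemma pt_ext (a b : Pt) (h0 : a 0 = b 0) (h1 : a 1 = b 1) : a = b := by
  ext x; fin_cases x <;> assumption
lemma dist_eq' (a b : Pt) : dist a b = Real.sqrt ((a 0 - b 0)^2 + (a 1 - b 1)^2) := by
  rw [EuclideanSpace.dist_eq, Fin.sum_univ_two]; simp [Real.dist_eq, sq_abs]
lemma dist_sq (a b : Pt) : dist a b ^ 2 = (a 0 - b 0)^2 + (a 1 - b 1)^2 := by
  rw [dist_eq', Real.sq_sqrt]; positivity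
lemma le_dist_of_sq {α : ℝ} (x y : Pt) (h0 : 0 ≤ α) (h : α^2 ≤ dist x y ^ 2) : α ≤ dist x y := by
  nlinarith [dist_nonneg (x := x) (y := y)]
lemma inner2 (a b : Pt) : (inner ℝ a b : ℝ) = a 0 * b 0 + a 1 * b 1 := by
  rw [PiLp.inner_apply, Fin.sum_univ_two]; simp [RCLike.inner_apply]; ring
lemma norm2 (a : Pt) : ‖a‖ = Real.sqrt (a 0 ^2 + a 1 ^2) := by
  rw [EuclideanSpace.norm_eq, Fin.sum_univ_two]; simp [sq_abs]
section AB
variable (A B : Pt)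
noncomputable def dd : ℝ := ((B 0 - A 0)^2 + (B 1 - A 1)^2)/4
noncomputable def rad (t : ℝ) : ℝ := Real.sqrt (t^2 + dd A B)
noncomputable def m0 : ℝ := (A 0 + B 0)/2
noncomputable def m1 : ℝ := (A 1 + B 1)/2
noncomputable def ctr (t : ℝ) : Pt :=
  mk2 (m0 A B - t * (B 1 - A 1)/(dist A B)) (m1 A B + t * (B 0 - A 0)/(dist A B))
noncomputable def uvec : Pt := mk2 (-(B 1 - A 1)/(dist A B)) ((B 0 - A 0)/(dist A B))
noncomputable def fA (q : Pt) : ℝ := ((m0 A B - q 0)^2 + (m1 A B - q 1)^2) - dd A B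
noncomputable def fB (q : Pt) : ℝ :=
  2*((m1 A B - q 1) * (B 0 - A 0) - (m0 A B - q 0) * (B 1 - A 1))/(dist A B)
lemma fA_A : fA A B A = 0 := by unfold fA m0 m1 dd; ring
lemma fA_B : fA A B B = 0 := by unfold fA m0 m1 dd; ring
lemma fB_A : fB A B A = 0 := by
  have : (m1 A B - A 1) * (B 0 - A 0) - (m0 A B - A 0) * (B 1 - A 1) = 0 := by
    unfold m0 m1; ring
  unfold fB; rw [this]; simp
lemma fB_B : fB A B B = 0 := by
  have : (m1 A B - B 1) * (B 0 - A 0) - (m0 A B - B 0) * (B 1 - A 1) = 0 := by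
    unfold m0 m1; ring
  unfold fB; rw [this]; simp
variable (hAB : A ≠ B)
include hAB
lemma dist_pos' : 0 < dist A B := by rw [dist_pos]; exact hAB
lemma dd_pos : 0 < dd A B := by
  have h := dist_pos' A B hAB; have := dist_sq A B; unfold dd; nlinarith
lemma rad_sq (t : ℝ) : rad A B t ^ 2 = t^2 + dd A B := by
  have := dd_pos A B hAB; rw [rad, Real.sq_sqrt]; nlinarith
lemma rad_pos (t : ℝ) : 0 < rad A B t := by
  have h1 := dd_pos A B hAB
  have h2 := rad_sq A B hAB t
  have h3 : 0 ≤ rad A B t := Real.sqrt_nonneg _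
  nlinarith
lemma dist_ctr_sq (t : ℝ) (q : Pt) :
    dist (ctr A B t) q ^ 2 = rad A B t ^ 2 + (fA A B q + t * fB A B q) := by
  have hs := dist_pos' A B hAB
  have hs' : dist A B ≠ 0 := ne_of_gt hs
  rw [dist_sq, rad_sq A B hAB]
  simp only [ctr, mk2_zero, mk2_one, fA, fB, m0, m1, dd]
  field_simp
  linear_combination (-16 * t^2) * dist_sq A B
lemma dist_ctr_A (t : ℝ) : dist (ctr A B t) A = rad A B t := by
  have h := dist_ctr_sq A B hAB t A
  rw [fA_A, fB_A] at h
  have h2 := rad_pos A B hAB t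
  have h3 : (0:ℝ) ≤ dist (ctr A B t) A := dist_nonneg
  nlinarith
lemma dist_ctr_B (t : ℝ) : dist (ctr A B t) B = rad A B t := by
  have h := dist_ctr_sq A B hAB t B
  rw [fA_B, fB_B] at h
  have h2 := rad_pos A B hAB t
  have h3 : (0:ℝ) ≤ dist (ctr A B t) B := dist_nonneg
  nlinarith
lemma exists_param (c : Pt) (h : dist c A = dist c B) : ∃ t, c = ctr A B t := by
  have hs := dist_pos' A B hAB
  have hs' : dist A B ≠ 0 := ne_of_gt hs
  have hsq : dist c A ^ 2 = dist c B ^ 2 := by rw [h]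
  rw [dist_sq, dist_sq] at hsq
  have hw : (c 0 - m0 A B) * (B 0 - A 0) + (c 1 - m1 A B) * (B 1 - A 1) = 0 := by
    unfold m0 m1; linear_combination (1/2 : ℝ) * hsq
  refine ⟨((c 1 - m1 A B) * (B 0 - A 0) - (c 0 - m0 A B) * (B 1 - A 1))/(dist A B), ?_⟩
  have hds := dist_sq A B
  apply pt_ext
  · simp only [ctr, mk2_zero, mk2_one]
    field_simp
    linear_combination (c 0 - m0 A B) * hds + (B 0 - A 0) * hw
  · simp only [ctr, mk2_zero, mk2_one]
    field_simp
    linear_combination (c 1 - m1 A B) * hds + (B 1 - A 1) * hw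
lemma collinear_of_fB (q : Pt) (h : fB A B q = 0) : Collinear ℝ ({A, B, q} : Set Pt) := by
  have hs := dist_pos' A B hAB
  have hs' : dist A B ≠ 0 := ne_of_gt hs
  have hnum : (m1 A B - q 1) * (B 0 - A 0) - (m0 A B - q 0) * (B 1 - A 1) = 0 := by
    unfold fB at h
    field_simp at h
    linarith
  have hds := dist_sq A B
  rw [collinear_iff_of_mem (Set.mem_insert A {B, q})]
  refine ⟨B - A, ?_⟩
  intro x hx
  rcases hx with rfl | rfl | rfl
  · exact ⟨0, by simp⟩
  · exact ⟨1, by simp⟩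
  · refine ⟨((x 0 - A 0) * (B 0 - A 0) + (x 1 - A 1) * (B 1 - A 1))/(dist A B ^ 2), ?_⟩
    have hcross : (x 0 - A 0) * (B 1 - A 1) = (x 1 - A 1) * (B 0 - A 0) := by
      unfold m0 m1 at hnum; linarith [hnum]
    apply pt_ext
    · simp only [vadd_eq_add, PiLp.add_apply, PiLp.smul_apply, PiLp.sub_apply, smul_eq_mul]
      field_simp
      linear_combination (x 0 - A 0) * hds + (B 1 - A 1) * hcross
    · simp only [vadd_eq_add, PiLp.add_apply, PiLp.smul_apply, PiLp.sub_apply, smul_eq_mul]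
      field_simp
      linear_combination (x 1 - A 1) * hds - (B 0 - A 0) * hcross
lemma norm_uvec : ‖uvec A B‖ = 1 := by
  have hs := dist_pos' A B hAB
  have hs' : dist A B ≠ 0 := ne_of_gt hs
  have hds := dist_sq A B
  rw [norm2]
  simp only [uvec, mk2_zero, mk2_one]
  rw [show (-(B 1 - A 1)/(dist A B)) ^2 + ((B 0 - A 0)/(dist A B))^2
      = ((A 0 - B 0)^2 + (A 1 - B 1)^2) / dist A B ^2 by ring]
  rw [← hds]
  rw [div_self (by positivity)]
  exact Real.sqrt_one
lemma inner_uvec_sub : (inner ℝ (uvec A B) (A - B) : ℝ) = 0 := by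
  have hs' : dist A B ≠ 0 := ne_of_gt (dist_pos' A B hAB)
  rw [inner2]
  simp only [uvec, mk2_zero, mk2_one, PiLp.sub_apply]
  field_simp
  ring
end AB
end Stmt0
namespace Stmt0
section Win
variable (n : ℕ) (p : ℕ → Pt) (a b : ℕ)

/-- the slice of the activity space of the edge `{a,b}` at window `(i,j)` -/
def slice (i j : ℕ) : Set ℝ :=
  {α | ((i, j, α) : ℕ × ℕ × ℝ) ∈ ActivitySpace n p ({a, b} : Finset ℕ)}

/-- feasibility of the parametrized center for the window `(i,j)` -/
def Tok (i j : ℕ) (t : ℝ) : Prop :=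
  ∀ m, i ≤ m → m ≤ j → 0 ≤ fA (p a) (p b) (p m) + t * fB (p a) (p b) (p m)

variable (hab : a < b) (ha1 : 1 ≤ a) (hbn : b ≤ n) (hpab : p a ≠ p b)

lemma mem_edge {k : ℕ} : k ∈ ({a, b} : Finset ℕ) ↔ k = a ∨ k = b := by
  simp [Finset.mem_insert, Finset.mem_singleton]

include hab ha1 hbn hpab in
lemma slice_char {i j : ℕ} (hi1 : 1 ≤ i) (hia : i ≤ a) (hbj : b ≤ j) (hjn : j ≤ n) :
    slice n p a b i j = {α | ∃ t, Tok p a b i j t ∧ α = rad (p a) (p b) t} := by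
  ext α
  constructor
  · rintro ⟨h1, h2, h3, h4, c, hc, hemp⟩
    have hca : dist c (p a) = α := hc a (by simp)
    have hcb : dist c (p b) = α := hc b (by simp)
    obtain ⟨t, rfl⟩ := exists_param (p a) (p b) hpab c (hca.trans hcb.symm)
    have hra : rad (p a) (p b) t = α := by rw [← dist_ctr_A (p a) (p b) hpab t]; exact hca
    refine ⟨t, ?_, hra.symm⟩
    intro m him hmj
    have hd := hemp m him hmj
    have hsq : α^2 ≤ dist (ctr (p a) (p b) t) (p m) ^ 2 :=
      pow_le_pow_left₀ (le_of_lt h4) hd 2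
    have hds := dist_ctr_sq (p a) (p b) hpab t (p m)
    nlinarith [hra]
  · rintro ⟨t, hT, rfl⟩
    refine ⟨hi1, hjn, ?_, rad_pos (p a) (p b) hpab t, ctr (p a) (p b) t, ?_, ?_⟩
    · intro k hk
      rcases (mem_edge a b).mp hk with h | h <;> rw [h]
      · exact ⟨hia, le_trans (le_of_lt hab) hbj⟩
      · exact ⟨le_trans hia (le_of_lt hab), hbj⟩
    · intro k hk
      rcases (mem_edge a b).mp hk with h | h <;> rw [h]
      · exact dist_ctr_A (p a) (p b) hpab t
      · exact dist_ctr_B (p a) (p b) hpab t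
    · intro m him hmj
      apply le_dist_of_sq _ _ (le_of_lt (rad_pos (p a) (p b) hpab t))
      have hds := dist_ctr_sq (p a) (p b) hpab t (p m)
      have := hT m him hmj
      linarith

include hab in
lemma slice_mono {i j1 j2 : ℕ} (hbj : b ≤ j1) (hj : j1 ≤ j2) :
    slice n p a b i j2 ⊆ slice n p a b i j1 := by
  rintro α ⟨h1, h2, h3, h4, c, hc, hemp⟩
  refine ⟨h1, le_trans hj h2, ?_, h4, c, hc, ?_⟩
  · intro k hk
    refine ⟨(h3 k hk).1, ?_⟩
    rcases (mem_edge a b).mp hk with h | h <;> rw [h]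
    · exact le_trans (le_of_lt hab) hbj
    · exact hbj
  · intro m him hmj
    exact hemp m him (le_trans hmj hj)


set_option maxHeartbeats 1000000 in
include hab ha1 hbn hpab in
lemma slice_ordconn {i j : ℕ} (hi1 : 1 ≤ i) (hia : i ≤ a) (hbj : b ≤ j) (hjn : j ≤ n) :
    Set.OrdConnected (slice n p a b i j) := by
  rw [slice_char n p a b hab ha1 hbn hpab hi1 hia hbj hjn]
  constructor
  intro α1 h1 α2 h2 β hβ
  simp only [Set.mem_setOf_eq] at h1 h2 ⊢
  obtain ⟨t1, ht1, rfl⟩ := h1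
  obtain ⟨t2, ht2, rfl⟩ := h2
  obtain ⟨hβ1, hβ2⟩ := hβ
  have hdd := dd_pos (p a) (p b) hpab
  have hr1 := rad_sq (p a) (p b) hpab t1
  have hr2 := rad_sq (p a) (p b) hpab t2
  have hrp1 := rad_pos (p a) (p b) hpab t1
  have hrp2 := rad_pos (p a) (p b) hpab t2
  have hβpos : 0 < β := lt_of_lt_of_le hrp1 hβ1
  have hβdd : dd (p a) (p b) ≤ β ^ 2 := by nlinarith
  set S := Real.sqrt (β^2 - dd (p a) (p b)) with hS
  have hS0 : 0 ≤ S := Real.sqrt_nonneg _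
  have hSsq : S ^ 2 = β^2 - dd (p a) (p b) := Real.sq_sqrt (by linarith)
  have ht1S : |t1| ≤ S := by
    rw [← Real.sqrt_sq_eq_abs, hS]
    apply Real.sqrt_le_sqrt
    nlinarith
  have hSt2 : S ≤ |t2| := by
    rw [← Real.sqrt_sq_eq_abs, hS]
    apply Real.sqrt_le_sqrt
    nlinarith
  have habs1 := abs_le.mp ht1S
  set s : ℝ := if 0 ≤ t2 then S else -S with hs
  have hrange : min t1 t2 ≤ s ∧ s ≤ max t1 t2 := by
    rcases le_or_gt 0 t2 with h2 | h2
    · rw [hs, if_pos h2]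
      refine ⟨le_trans (min_le_left _ _) habs1.2, ?_⟩
      have hst : S ≤ t2 := by rwa [abs_of_nonneg h2] at hSt2
      exact le_trans hst (le_max_right _ _)
    · rw [hs, if_neg (not_le.mpr h2)]
      constructor
      · have h' : S ≤ -t2 := by rwa [abs_of_neg h2] at hSt2
        have h'' : t2 ≤ -S := by linarith
        exact le_trans (min_le_right _ _) h''
      · exact le_trans habs1.1 (le_max_left _ _)
  have hTok : Tok p a b i j s := by
    intro m him hmj
    have h1 := ht1 m him hmj
    have h2 := ht2 m him hmj
    rcases le_or_gt 0 (fB (p a) (p b) (p m)) with hf | hf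
    · have hmin : 0 ≤ fA (p a) (p b) (p m) + min t1 t2 * fB (p a) (p b) (p m) := by
        rcases min_cases t1 t2 with ⟨hm, _⟩ | ⟨hm, _⟩ <;> rw [hm] <;> assumption
      nlinarith [hrange.1]
    · have hmax : 0 ≤ fA (p a) (p b) (p m) + max t1 t2 * fB (p a) (p b) (p m) := by
        rcases max_cases t1 t2 with ⟨hm, _⟩ | ⟨hm, _⟩ <;> rw [hm] <;> assumption
      nlinarith [hrange.2]
  refine ⟨s, hTok, ?_⟩
  have hssq : s ^ 2 = S ^ 2 := by
    rcases le_or_gt 0 t2 with h2 | h2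
    · rw [hs, if_pos h2]
    · rw [hs, if_neg (not_le.mpr h2)]; ring
  have hradsq : rad (p a) (p b) s ^ 2 = β ^ 2 := by
    rw [rad_sq (p a) (p b) hpab s, hssq, hSsq]; ring
  have hrsp := rad_pos (p a) (p b) hpab s
  nlinarith

variable (hcol : ∀ m, 1 ≤ m → m ≤ n → m ≠ a → m ≠ b → fB (p a) (p b) (p m) ≠ 0)

set_option maxHeartbeats 1000000 in
include hab ha1 hbn hpab hcol in
lemma initial_triangle {i : ℕ} (hi1 : 1 ≤ i) (hia : i ≤ a)
    (hne : (slice n p a b i b).Nonempty) :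
    ∃ t : Finset ℕ, t ∈ TriSet n p ∧ ({a, b} : Finset ℕ) ⊆ t ∧ ∀ k ∈ t, k ≤ b := by
  classical
  have hib : i ≤ b := le_trans hia (le_of_lt hab)
  set M : Finset ℕ := (Finset.Icc i b).filter (fun m => m ≠ a ∧ m ≠ b) with hM
  have hmemM : ∀ m, m ∈ M ↔ (i ≤ m ∧ m ≤ b ∧ m ≠ a ∧ m ≠ b) := by
    intro m; simp [hM, Finset.mem_filter, Finset.mem_Icc, and_assoc]
  rcases Finset.eq_empty_or_nonempty M with hMe | hMne
  · -- hull-facet case: the degenerate triangle {a,b} itself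
    refine ⟨{a, b}, ⟨i, b, ?_⟩, subset_rfl, ?_⟩
    · refine ⟨hi1, hib, hbn, ?_, Or.inr ⟨Finset.card_pair (ne_of_lt hab), uvec (p a) (p b), norm_uvec (p a) (p b) hpab, ?_, ?_⟩⟩
      · intro k hk
        rcases (mem_edge a b).mp hk with h | h <;> rw [h]
        · exact ⟨hia, le_of_lt hab⟩
        · exact ⟨hib, le_refl b⟩
      · intro k hk l hl
        rcases (mem_edge a b).mp hk with h | h <;> rcases (mem_edge a b).mp hl with h' | h' <;>
          rw [h, h']
        · simp
        · exact inner_uvec_sub (p a) (p b) hpab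
        · have hiu := inner_uvec_sub (p a) (p b) hpab
          have h2 : ((p b) - (p a)) = -((p a) - (p b)) := by abel
          rw [h2, inner_neg_right, hiu]; ring
        · simp
      · intro k hk m him hmb hmt
        exfalso
        have : m ∈ M := by
          rw [hmemM]
          refine ⟨him, hmb, ?_, ?_⟩ <;> intro h <;> exact hmt (by rw [h]; simp [mem_edge])
        rw [hMe] at this
        simp at this
    · intro k hk
      rcases (mem_edge a b).mp hk with h | h <;> rw [h]
      · exact le_of_lt hab
  · -- some other point in the window: a binding constraint exists
    have hBne : ∀ m ∈ M, fB (p a) (p b) (p m) ≠ 0 := by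
      intro m hm
      rw [hmemM] at hm
      exact hcol m (le_trans hi1 hm.1) (le_trans hm.2.1 hbn) hm.2.2.1 hm.2.2.2
    -- a feasible parameter t0
    have hch := slice_char n p a b hab ha1 hbn hpab hi1 hia (le_refl b) hbn
    obtain ⟨α0, hα0⟩ := hne
    rw [hch] at hα0
    obtain ⟨t0, ht0, rfl⟩ := hα0
    by_cases hneg : ∃ m ∈ M, fB (p a) (p b) (p m) < 0
    · set S : Finset ℕ := M.filter (fun m => fB (p a) (p b) (p m) < 0) with hS
      have hSne : S.Nonempty := by
        obtain ⟨m, hm, hm'⟩ := hneg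
        exact ⟨m, by simp [hS, Finset.mem_filter, hm, hm']⟩
      set tstar := S.inf' hSne (fun m => -(fA (p a) (p b) (p m))/(fB (p a) (p b) (p m))) with htstar
      obtain ⟨m1, hm1S, hm1⟩ := Finset.exists_mem_eq_inf' hSne
        (fun m => -(fA (p a) (p b) (p m))/(fB (p a) (p b) (p m)))
      have hm1M : m1 ∈ M := (Finset.mem_filter.mp hm1S).1
      have hm1neg : fB (p a) (p b) (p m1) < 0 := (Finset.mem_filter.mp hm1S).2
      have ht0le : t0 ≤ tstar := by
        apply Finset.le_inf'
        intro m hm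
        have hmneg : fB (p a) (p b) (p m) < 0 := (Finset.mem_filter.mp hm).2
        have hmM := (Finset.mem_filter.mp hm).1
        rw [hmemM] at hmM
        have := ht0 m hmM.1 hmM.2.1
        rw [le_div_iff_of_neg hmneg]
        nlinarith
      have hTokstar : Tok p a b i b tstar := by
        intro m him hmb
        by_cases hma : m = a
        · rw [hma, fA_A, fB_A]; simp
        · by_cases hmb' : m = b
          · rw [hmb', fA_B, fB_B]; simp
          · have hmM : m ∈ M := by rw [hmemM]; exact ⟨him, hmb, hma, hmb'⟩
            rcases lt_trichotomy (fB (p a) (p b) (p m)) 0 with hf | hf | hf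
            · have hmS : m ∈ S := by simp [hS, Finset.mem_filter, hmM, hf]
              have := Finset.inf'_le (fun m => -(fA (p a) (p b) (p m))/(fB (p a) (p b) (p m))) hmS
              rw [← htstar] at this
              rw [le_div_iff_of_neg hf] at this
              nlinarith
            · exact absurd hf (hBne m hmM)
            · have := ht0 m him hmb
              nlinarith
      have heq : fA (p a) (p b) (p m1) + tstar * fB (p a) (p b) (p m1) = 0 := by
        have hne0 : fB (p a) (p b) (p m1) ≠ 0 := ne_of_lt hm1neg
        rw [htstar, hm1]
        field_simp
        ring
      have hm1M' := (hmemM m1).mp hm1M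
      have hm1ne : m1 ∉ ({a, b} : Finset ℕ) := by
        rw [mem_edge]; push_neg; exact ⟨hm1M'.2.2.1, hm1M'.2.2.2⟩
      refine ⟨insert m1 {a, b}, ⟨i, b, ?_⟩, Finset.subset_insert _ _, ?_⟩
      · refine ⟨hi1, hib, hbn, ?_, Or.inl ⟨?_, ctr (p a) (p b) tstar, rad (p a) (p b) tstar, ?_, ?_⟩⟩
        · intro k hk
          rcases Finset.mem_insert.mp hk with h | h
          · rw [h]; exact ⟨hm1M'.1, hm1M'.2.1⟩
          · rcases (mem_edge a b).mp h with h' | h' <;> rw [h']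
            · exact ⟨hia, le_of_lt hab⟩
            · exact ⟨hib, le_refl b⟩
        · rw [Finset.card_insert_of_notMem hm1ne, Finset.card_pair (ne_of_lt hab)]
        · intro k hk
          rcases Finset.mem_insert.mp hk with h | h
          · rw [h]
            have hds := dist_ctr_sq (p a) (p b) hpab tstar (p m1)
            rw [heq] at hds
            have := rad_pos (p a) (p b) hpab tstar
            have h3 : (0:ℝ) ≤ dist (ctr (p a) (p b) tstar) (p m1) := dist_nonneg
            nlinarith
          · rcases (mem_edge a b).mp h with h' | h' <;> rw [h']
            · exact dist_ctr_A (p a) (p b) hpab tstar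
            · exact dist_ctr_B (p a) (p b) hpab tstar
        · intro m him hmb
          apply le_dist_of_sq _ _ (le_of_lt (rad_pos (p a) (p b) hpab tstar))
          have hds := dist_ctr_sq (p a) (p b) hpab tstar (p m)
          have := hTokstar m him hmb
          linarith
      · intro k hk
        rcases Finset.mem_insert.mp hk with h | h
        · rw [h]; exact hm1M'.2.1
        · rcases (mem_edge a b).mp h with h' | h' <;> rw [h']
          · exact le_of_lt hab
    · -- all slopes positive
      push_neg at hneg
      have hpos : ∀ m ∈ M, 0 < fB (p a) (p b) (p m) := by
        intro m hm
        rcases lt_trichotomy (fB (p a) (p b) (p m)) 0 with h | h | h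
        · exact absurd h (not_lt.mpr (hneg m hm))
        · exact absurd h (hBne m hm)
        · exact h
      set tstar := M.sup' hMne (fun m => -(fA (p a) (p b) (p m))/(fB (p a) (p b) (p m))) with htstar
      obtain ⟨m1, hm1M, hm1⟩ := Finset.exists_mem_eq_sup' hMne
        (fun m => -(fA (p a) (p b) (p m))/(fB (p a) (p b) (p m)))
      have hTokstar : Tok p a b i b tstar := by
        intro m him hmb
        by_cases hma : m = a
        · rw [hma, fA_A, fB_A]; simp
        · by_cases hmb' : m = b
          · rw [hmb', fA_B, fB_B]; simp
          · have hmM : m ∈ M := by rw [hmemM]; exact ⟨him, hmb, hma, hmb'⟩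
            have hf := hpos m hmM
            have := Finset.le_sup' (fun m => -(fA (p a) (p b) (p m))/(fB (p a) (p b) (p m))) hmM
            rw [← htstar] at this
            rw [div_le_iff₀ hf] at this
            nlinarith
      have heq : fA (p a) (p b) (p m1) + tstar * fB (p a) (p b) (p m1) = 0 := by
        have hne0 : fB (p a) (p b) (p m1) ≠ 0 := ne_of_gt (hpos m1 hm1M)
        rw [htstar, hm1]
        field_simp
        ring
      have hm1M' := (hmemM m1).mp hm1M
      have hm1ne : m1 ∉ ({a, b} : Finset ℕ) := by
        rw [mem_edge]; push_neg; exact ⟨hm1M'.2.2.1, hm1M'.2.2.2⟩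
      refine ⟨insert m1 {a, b}, ⟨i, b, ?_⟩, Finset.subset_insert _ _, ?_⟩
      · refine ⟨hi1, hib, hbn, ?_, Or.inl ⟨?_, ctr (p a) (p b) tstar, rad (p a) (p b) tstar, ?_, ?_⟩⟩
        · intro k hk
          rcases Finset.mem_insert.mp hk with h | h
          · rw [h]; exact ⟨hm1M'.1, hm1M'.2.1⟩
          · rcases (mem_edge a b).mp h with h' | h' <;> rw [h']
            · exact ⟨hia, le_of_lt hab⟩
            · exact ⟨hib, le_refl b⟩
        · rw [Finset.card_insert_of_notMem hm1ne, Finset.card_pair (ne_of_lt hab)]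
        · intro k hk
          rcases Finset.mem_insert.mp hk with h | h
          · rw [h]
            have hds := dist_ctr_sq (p a) (p b) hpab tstar (p m1)
            rw [heq] at hds
            have := rad_pos (p a) (p b) hpab tstar
            have h3 : (0:ℝ) ≤ dist (ctr (p a) (p b) tstar) (p m1) := dist_nonneg
            nlinarith
          · rcases (mem_edge a b).mp h with h' | h' <;> rw [h']
            · exact dist_ctr_A (p a) (p b) hpab tstar
            · exact dist_ctr_B (p a) (p b) hpab tstar
        · intro m him hmb
          apply le_dist_of_sq _ _ (le_of_lt (rad_pos (p a) (p b) hpab tstar))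
          have hds := dist_ctr_sq (p a) (p b) hpab tstar (p m)
          have := hTokstar m him hmb
          linarith
      · intro k hk
        rcases Finset.mem_insert.mp hk with h | h
        · rw [h]; exact hm1M'.2.1
        · rcases (mem_edge a b).mp h with h' | h' <;> rw [h']
          · exact le_of_lt hab

set_option maxHeartbeats 1000000 in
include hab ha1 hbn hpab in
lemma change_triangle {i j : ℕ} (hi1 : 1 ≤ i) (hia : i ≤ a) (hbj : b ≤ j) (hjn : j + 1 ≤ n)
    (hne : (slice n p a b i (j+1)).Nonempty)
    (hdiff : slice n p a b i (j+1) ≠ slice n p a b i j) :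
    IsDelaunayTriangle n p i (j+1) (insert (j+1) ({a, b} : Finset ℕ)) := by
  have hjn' : j ≤ n := le_trans (Nat.le_succ j) hjn
  have hsub : slice n p a b i (j+1) ⊆ slice n p a b i j :=
    slice_mono n p a b hab hbj (Nat.le_succ j)
  -- a point in the big slice not in the small one
  have hex : ∃ α, α ∈ slice n p a b i j ∧ α ∉ slice n p a b i (j+1) := by
    by_contra hcon
    push_neg at hcon
    exact hdiff (Set.Subset.antisymm hsub hcon)
  obtain ⟨α, hαj, hαj1⟩ := hex
  have hch := slice_char n p a b hab ha1 hbn hpab hi1 hia hbj hjn'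
  have hch1 := slice_char n p a b hab ha1 hbn hpab hi1 hia (le_trans hbj (Nat.le_succ j)) hjn
  rw [hch] at hαj
  obtain ⟨t1, ht1, rfl⟩ := hαj
  -- the failing point must be j+1
  have hf1 : fA (p a) (p b) (p (j+1)) + t1 * fB (p a) (p b) (p (j+1)) < 0 := by
    have hradpos := rad_pos (p a) (p b) hpab t1
    have hnotmem : ¬ (∀ m : ℕ, i ≤ m → m ≤ j + 1 →
        rad (p a) (p b) t1 ≤ dist (ctr (p a) (p b) t1) (p m)) := by
      intro hall
      apply hαj1
      refine ⟨hi1, hjn, ?_, hradpos, ctr (p a) (p b) t1, ?_, hall⟩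
      · intro k hk
        rcases (mem_edge a b).mp hk with h | h <;> rw [h]
        · exact ⟨hia, le_trans (le_of_lt hab) (le_trans hbj (Nat.le_succ j))⟩
        · exact ⟨le_trans hia (le_of_lt hab), le_trans hbj (Nat.le_succ j)⟩
      · intro k hk
        rcases (mem_edge a b).mp hk with h | h <;> rw [h]
        · exact dist_ctr_A (p a) (p b) hpab t1
        · exact dist_ctr_B (p a) (p b) hpab t1
    push_neg at hnotmem
    obtain ⟨m, him, hmj1, hmlt⟩ := hnotmem
    have hmeq : m = j + 1 := by
      by_contra hmne
      have hmj : m ≤ j := by omega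
      apply not_lt.mpr _ hmlt
      apply le_dist_of_sq _ _ (le_of_lt hradpos)
      have hds := dist_ctr_sq (p a) (p b) hpab t1 (p m)
      have := ht1 m him hmj
      linarith
    rw [hmeq] at hmlt
    have hds := dist_ctr_sq (p a) (p b) hpab t1 (p (j+1))
    have h3 : (0:ℝ) ≤ dist (ctr (p a) (p b) t1) (p (j+1)) := dist_nonneg
    nlinarith
  -- a feasible parameter for the bigger window
  obtain ⟨α0, hα0⟩ := hne
  rw [hch1] at hα0
  obtain ⟨t0, ht0, rfl⟩ := hα0
  have hf0 : 0 ≤ fA (p a) (p b) (p (j+1)) + t0 * fB (p a) (p b) (p (j+1)) :=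
    ht0 (j+1) (by omega) (le_refl _)
  -- interpolate
  set g0 := fA (p a) (p b) (p (j+1)) + t0 * fB (p a) (p b) (p (j+1)) with hg0
  set g1 := fA (p a) (p b) (p (j+1)) + t1 * fB (p a) (p b) (p (j+1)) with hg1
  have hden : 0 < g0 - g1 := by rw [hg0, hg1]; linarith
  set lam := g0 / (g0 - g1) with hlam
  have hlam0 : 0 ≤ lam := div_nonneg (by linarith) (le_of_lt hden)
  have hlam1 : lam ≤ 1 := by
    rw [hlam, div_le_one hden]; linarith
  set tstar := t0 + lam * (t1 - t0) with htstar
  have hkey : ∀ q : Pt, fA (p a) (p b) q + tstar * fB (p a) (p b) q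
      = (1 - lam) * (fA (p a) (p b) q + t0 * fB (p a) (p b) q)
        + lam * (fA (p a) (p b) q + t1 * fB (p a) (p b) q) := by
    intro q; rw [htstar]; ring
  have heq : fA (p a) (p b) (p (j+1)) + tstar * fB (p a) (p b) (p (j+1)) = 0 := by
    rw [hkey, ← hg0, ← hg1, hlam]
    field_simp
    ring
  have hTokstar : ∀ m, i ≤ m → m ≤ j + 1 →
      0 ≤ fA (p a) (p b) (p m) + tstar * fB (p a) (p b) (p m) := by
    intro m him hmj1
    by_cases hmeq : m = j + 1
    · rw [hmeq, heq]
    · have hmj : m ≤ j := by omega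
      rw [hkey]
      have h0 := ht0 m him (by omega)
      have h1 := ht1 m him hmj
      nlinarith
  have hj1ne : j + 1 ∉ ({a, b} : Finset ℕ) := by
    rw [mem_edge]; push_neg
    constructor <;> omega
  refine ⟨hi1, by omega, hjn, ?_, Or.inl ⟨?_, ctr (p a) (p b) tstar, rad (p a) (p b) tstar, ?_, ?_⟩⟩
  · intro k hk
    rcases Finset.mem_insert.mp hk with h | h
    · rw [h]; exact ⟨by omega, le_refl _⟩
    · rcases (mem_edge a b).mp h with h' | h' <;> rw [h']
      · exact ⟨hia, by omega⟩
      · exact ⟨le_trans hia (le_of_lt hab), by omega⟩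
  · rw [Finset.card_insert_of_notMem hj1ne, Finset.card_pair (ne_of_lt hab)]
  · intro k hk
    rcases Finset.mem_insert.mp hk with h | h
    · rw [h]
      have hds := dist_ctr_sq (p a) (p b) hpab tstar (p (j+1))
      rw [heq] at hds
      have := rad_pos (p a) (p b) hpab tstar
      have h3 : (0:ℝ) ≤ dist (ctr (p a) (p b) tstar) (p (j+1)) := dist_nonneg
      nlinarith
    · rcases (mem_edge a b).mp h with h' | h' <;> rw [h']
      · exact dist_ctr_A (p a) (p b) hpab tstar
      · exact dist_ctr_B (p a) (p b) hpab tstar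
  · intro m him hmj
    apply le_dist_of_sq _ _ (le_of_lt (rad_pos (p a) (p b) hpab tstar))
    have hds := dist_ctr_sq (p a) (p b) hpab tstar (p m)
    have := hTokstar m him hmj
    linarith

open scoped Classical in
noncomputable def Start (i : ℕ) : Finset ℕ :=
  (Finset.Icc b n).filter (fun j => (slice n p a b i j).Nonempty ∧
    (j = b ∨ slice n p a b i j ≠ slice n p a b i (j-1)))

def cub (i jst : ℕ) : Set (ℕ × ℕ × ℝ) :=
  ({i} : Set ℕ) ×ˢ (({j | jst ≤ j ∧ j ≤ n ∧ slice n p a b i j = slice n p a b i jst} : Set ℕ)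
    ×ˢ slice n p a b i jst)

lemma mem_Start {i j : ℕ} : j ∈ Start n p a b i ↔
    (b ≤ j ∧ j ≤ n ∧ (slice n p a b i j).Nonempty ∧
      (j = b ∨ slice n p a b i j ≠ slice n p a b i (j-1))) := by
  classical
  simp [Start, Finset.mem_filter, Finset.mem_Icc, and_assoc]

include hab in
lemma run_found {i j : ℕ} {α : ℝ} (hbj : b ≤ j) (hjn : j ≤ n) (hα : α ∈ slice n p a b i j) :
    ∃ jst ∈ Start n p a b i, jst ≤ j ∧ slice n p a b i j = slice n p a b i jst := by
  classical
  set K : Finset ℕ := (Finset.Icc b j).filter (fun j' => slice n p a b i j' = slice n p a b i j)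
    with hK
  have hjK : j ∈ K := by simp [hK, Finset.mem_filter, Finset.mem_Icc, hbj]
  have hKne : K.Nonempty := ⟨j, hjK⟩
  set jst := K.min' hKne with hjst
  have hjstK : jst ∈ K := K.min'_mem hKne
  simp only [hK, Finset.mem_filter, Finset.mem_Icc] at hjstK
  obtain ⟨⟨hbjst, hjstj⟩, hslice⟩ := hjstK
  refine ⟨jst, ?_, hjstj, hslice.symm⟩
  rw [mem_Start]
  refine ⟨hbjst, le_trans hjstj hjn, ?_, ?_⟩
  · rw [hslice]; exact ⟨α, hα⟩
  · by_cases hjb : jst = b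
    · exact Or.inl hjb
    · refine Or.inr ?_
      intro hcon
      have hjst1 : jst - 1 ∈ K := by
        simp only [hK, Finset.mem_filter, Finset.mem_Icc]
        refine ⟨⟨by omega, by omega⟩, ?_⟩
        rw [← hcon, hslice]
      have := K.min'_le _ hjst1
      omega

include hab in
lemma slice_sandwich {i jst j' j : ℕ} (hbjst : b ≤ jst) (h1 : jst ≤ j') (h2 : j' ≤ j)
    (heq : slice n p a b i j = slice n p a b i jst) :
    slice n p a b i j' = slice n p a b i jst := by
  have hs1 : slice n p a b i j ⊆ slice n p a b i j' :=
    slice_mono n p a b hab (le_trans hbjst h1) h2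
  have hs2 : slice n p a b i j' ⊆ slice n p a b i jst :=
    slice_mono n p a b hab hbjst h1
  rw [heq] at hs1
  exact Set.Subset.antisymm hs2 hs1

include hab in
lemma cub_subset {i jst : ℕ} (hjst : b ≤ jst) :
    cub n p a b i jst ⊆ ActivitySpace n p ({a, b} : Finset ℕ) := by
  rintro ⟨x, j, α⟩ ⟨hx, ⟨hj1, hj2, hj3⟩, hα⟩
  simp only [Set.mem_singleton_iff] at hx
  subst hx
  rw [← hj3] at hα
  exact hα

include hab ha1 hbn hpab in
lemma cub_isCuboid {i jst : ℕ} (hi1 : 1 ≤ i) (hia : i ≤ a) (hjb : b ≤ jst) (hjn : jst ≤ n) :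
    IsCuboid (cub n p a b i jst) := by
  refine ⟨{i}, {j | jst ≤ j ∧ j ≤ n ∧ slice n p a b i j = slice n p a b i jst},
    slice n p a b i jst, Set.ordConnected_singleton, ?_, ?_, rfl⟩
  · constructor
    intro x hx y hy z hz
    simp only [Set.mem_setOf_eq] at hx hy ⊢
    obtain ⟨hz1, hz2⟩ := hz
    refine ⟨le_trans hx.1 hz1, le_trans hz2 hy.2.1, ?_⟩
    exact slice_sandwich n p a b hab hjb (le_trans hx.1 hz1) hz2 hy.2.2
  · exact slice_ordconn n p a b hab ha1 hbn hpab hi1 hia hjb hjn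

set_option maxHeartbeats 1000000 in
include hab ha1 hbn hpab hcol in
lemma key_partition (TsF : Finset (Finset ℕ)) (hTsF : ∀ t, t ∈ TsF ↔ t ∈ TriSet n p) :
    ∃ Fe : Finset (Set (ℕ × ℕ × ℝ)),
      IsCuboidPartition Fe (ActivitySpace n p ({a, b} : Finset ℕ)) ∧
      Fe.card ≤ (n - 1) * (TsF.filter (fun t => ({a, b} : Finset ℕ) ⊆ t)).card := by
  classical
  set Fe := (Finset.Icc 1 a).biUnion
    (fun i => (Start n p a b i).image (cub n p a b i)) with hFe
  have mem_Fe : ∀ S, S ∈ Fe ↔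
      ∃ i, (1 ≤ i ∧ i ≤ a) ∧ ∃ jst, jst ∈ Start n p a b i ∧ cub n p a b i jst = S := by
    intro S
    simp [hFe, Finset.mem_biUnion, Finset.mem_image, Finset.mem_Icc]
  refine ⟨Fe, ⟨?_, ?_, ?_⟩, ?_⟩
  · -- each member is a cuboid
    intro S hS
    rw [mem_Fe] at hS
    obtain ⟨i, ⟨hi1, hia⟩, jst, hjst, rfl⟩ := hS
    rw [mem_Start] at hjst
    exact cub_isCuboid n p a b hab ha1 hbn hpab hi1 hia hjst.1 hjst.2.1
  · -- pairwise disjoint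
    intro S hS S' hS' hne
    rw [Finset.mem_coe, mem_Fe] at hS hS'
    obtain ⟨i, ⟨hi1, hia⟩, jst, hjst, rfl⟩ := hS
    obtain ⟨i', ⟨hi1', hia'⟩, jst', hjst', rfl⟩ := hS'
    have hdisj : ∀ (i₁ i₂ jst₁ jst₂ : ℕ), jst₁ ∈ Start n p a b i₁ → jst₂ ∈ Start n p a b i₂ →
        (i₁ ≠ i₂ ∨ (i₁ = i₂ ∧ jst₁ < jst₂)) →
        Disjoint (cub n p a b i₁ jst₁) (cub n p a b i₂ jst₂) := by
      intro i₁ i₂ jst₁ jst₂ hj1 hj2 hcase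
      rw [Set.disjoint_left]
      rintro ⟨x, j, α⟩ ⟨hx, ⟨hja, hjb', hjc⟩, hα⟩ ⟨hx', ⟨hja', hjb'', hjc'⟩, hα'⟩
      simp only [Set.mem_singleton_iff] at hx hx'
      rcases hcase with hne' | ⟨heq, hlt⟩
      · exact hne' (hx ▸ hx' ▸ rfl)
      · subst heq
        subst hx
        rw [mem_Start] at hj1 hj2
        have hb2 : jst₂ ≠ b := by omega
        have hneq := hj2.2.2.2.resolve_left hb2
        apply hneq
        have h1 : slice n p a b x (jst₂ - 1) = slice n p a b x jst₁ :=
          slice_sandwich n p a b hab hj1.1 (by omega) (by omega) hjc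
        rw [← hjc', hjc]
        exact h1.symm
    rcases eq_or_ne i i' with rfl | hii
    · rcases lt_trichotomy jst jst' with h | h | h
      · exact hdisj i i jst jst' hjst hjst' (Or.inr ⟨rfl, h⟩)
      · exact absurd (h ▸ rfl) hne
      · exact (hdisj i i jst' jst hjst' hjst (Or.inr ⟨rfl, h⟩)).symm
    · exact hdisj i i' jst jst' hjst hjst' (Or.inl hii)
  · -- union is the activity space
    apply Set.Subset.antisymm
    · intro x hx
      obtain ⟨S, hS, hxS⟩ := hx
      rw [Finset.mem_coe, mem_Fe] at hS
      obtain ⟨i, ⟨hi1, hia⟩, jst, hjst, rfl⟩ := hS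
      rw [mem_Start] at hjst
      exact cub_subset n p a b hab hjst.1 hxS
    · rintro ⟨i, j, α⟩ hx
      have h1 : 1 ≤ i := hx.1
      have h2 : j ≤ n := hx.2.1
      have hia : i ≤ a := (hx.2.2.1 a (by simp)).1
      have hbj : b ≤ j := (hx.2.2.1 b (by simp [mem_edge])).2
      have hαs : α ∈ slice n p a b i j := hx
      obtain ⟨jst, hjst, hjstj, heq⟩ := run_found n p a b hab hbj h2 hαs
      refine ⟨cub n p a b i jst, ?_, ?_⟩
      · rw [Finset.mem_coe, mem_Fe]
        exact ⟨i, ⟨h1, hia⟩, jst, hjst, rfl⟩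
      · refine ⟨rfl, ⟨hjstj, h2, heq⟩, ?_⟩
        rw [← heq]
        exact hαs
  · -- cardinality bound
    set X := (TsF.filter (fun t => ({a, b} : Finset ℕ) ⊆ t)).card with hX
    have hstep : ∀ i, 1 ≤ i → i ≤ a → (Start n p a b i).card ≤ X := by
      intro i hi1 hia
      set tb : Finset ℕ := if h : (slice n p a b i b).Nonempty then
        Classical.choose (initial_triangle n p a b hab ha1 hbn hpab hcol hi1 hia h) else ∅
        with htb
      have htb_spec : (slice n p a b i b).Nonempty →
          tb ∈ TriSet n p ∧ ({a, b} : Finset ℕ) ⊆ tb ∧ ∀ k ∈ tb, k ≤ b := by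
        intro h
        rw [htb, dif_pos h]
        exact Classical.choose_spec (initial_triangle n p a b hab ha1 hbn hpab hcol hi1 hia h)
      set φ : ℕ → Finset ℕ := fun jst => if jst = b then tb else insert jst {a, b} with hφ
      apply Finset.card_le_card_of_injOn φ
      · intro jst hjst
        rw [Finset.mem_coe, mem_Start] at hjst
        obtain ⟨hbjst, hjstn, hne, hor⟩ := hjst
        rw [Finset.mem_coe, Finset.mem_filter]
        by_cases hjb : jst = b
        · subst hjb
          rw [hφ]
          simp only [if_pos rfl]
          obtain ⟨hs1, hs2, _⟩ := htb_spec hne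
          exact ⟨(hTsF _).mpr hs1, hs2⟩
        · have hdiff := hor.resolve_left hjb
          have hsucc : jst - 1 + 1 = jst := by omega
          have htri := change_triangle n p a b hab ha1 hbn hpab (i := i) (j := jst - 1)
            hi1 hia (by omega) (by omega)
            (by rw [hsucc]; exact hne) (by rw [hsucc]; exact hdiff)
          rw [hsucc] at htri
          rw [hφ]
          simp only [if_neg hjb]
          exact ⟨(hTsF _).mpr ⟨i, jst, htri⟩, Finset.subset_insert _ _⟩
      · -- injectivity
        intro j1 hj1 j2 hj2 hφeq
        simp only [Finset.mem_coe, mem_Start] at hj1 hj2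
        have haux : ∀ j' : ℕ, b ≤ j' → j' ≠ b →
            (slice n p a b i b).Nonempty → φ b ≠ φ j' := by
          intro j' hbj' hj'b hnoneb hcon
          rw [hφ] at hcon
          simp only [if_neg hj'b, eq_self_iff_true, if_true] at hcon
          obtain ⟨_, _, hle⟩ := htb_spec hnoneb
          have hmem : j' ∈ tb := by rw [hcon]; exact Finset.mem_insert_self _ _
          have := hle j' hmem
          omega
        by_cases h1b : j1 = b <;> by_cases h2b : j2 = b
        · omega
        · rw [h1b] at hφeq
          exact absurd hφeq (haux j2 hj2.1 h2b (h1b ▸ hj1.2.2.1))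
        · rw [h2b] at hφeq
          exact absurd hφeq.symm (haux j1 hj1.1 h1b (h2b ▸ hj2.2.2.1))
        · rw [hφ] at hφeq
          simp only [if_neg h1b, if_neg h2b] at hφeq
          have : j1 ∈ insert j2 ({a, b} : Finset ℕ) := by
            rw [← hφeq]; exact Finset.mem_insert_self _ _
          rcases Finset.mem_insert.mp this with h | h
          · exact h
          · rcases (mem_edge a b).mp h with h' | h' <;> omega
    calc Fe.card ≤ ∑ i ∈ Finset.Icc 1 a, ((Start n p a b i).image (cub n p a b i)).card :=
          Finset.card_biUnion_le
      _ ≤ ∑ i ∈ Finset.Icc 1 a, (Start n p a b i).card := by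
          apply Finset.sum_le_sum
          intro i _
          exact Finset.card_image_le
      _ ≤ ∑ i ∈ Finset.Icc 1 a, X := by
          apply Finset.sum_le_sum
          intro i hi
          rw [Finset.mem_Icc] at hi
          exact hstep i hi.1 hi.2
      _ = a * X := by
          rw [Finset.sum_const, Nat.card_Icc]
          simp [Nat.smul_one_eq_cast]
      _ ≤ (n - 1) * X := by
          apply Nat.mul_le_mul_right
          omega
end Win

lemma triSet_subset_Icc {n : ℕ} {p : ℕ → Pt} {t : Finset ℕ} (h : t ∈ TriSet n p) :
    t ⊆ Finset.Icc 1 n := by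
  obtain ⟨i, j, hD⟩ := h
  intro k hk
  have h1 := hD.2.2.2.1 k hk
  rw [Finset.mem_Icc]
  exact ⟨le_trans hD.1 h1.1, le_trans h1.2 hD.2.2.1⟩

lemma triSet_card {n : ℕ} {p : ℕ → Pt} {t : Finset ℕ} (h : t ∈ TriSet n p) :
    t.card = 3 ∨ t.card = 2 := by
  obtain ⟨i, j, hD⟩ := h
  rcases hD.2.2.2.2 with ⟨h3, _⟩ | ⟨h2, _⟩
  · exact Or.inl h3
  · exact Or.inr h2

end Stmt0

/-- `|α_T| ∈ O(n · |T|)`: for each edge `e` of a triangle of `T` there is a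
finite partition of `L^α_e` into cuboids such that the total number of cuboids over all
such edges is at most `3 · (n − 1) · |T|`. -/
theorem stmt0 (n : ℕ) (p : ℕ → Pt) (hgp : GenPos n p) :
    ∃ Ts Es : Finset (Finset ℕ), (Ts : Set (Finset ℕ)) = TriSet n p ∧
      (Es : Set (Finset ℕ)) = EdgeSet n p ∧
      ∃ F : Finset ℕ → Finset (Set (ℕ × ℕ × ℝ)),
        (∀ e ∈ Es, IsCuboidPartition (F e) (ActivitySpace n p e)) ∧
        ∑ e ∈ Es, (F e).card ≤ 3 * (n - 1) * Ts.card := by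
  classical
  set TsF := (Finset.Icc 1 n).powerset.filter (fun t => t ∈ TriSet n p) with hTsF
  set EsF := (Finset.Icc 1 n).powerset.filter (fun e => e ∈ EdgeSet n p) with hEsF
  have hTs : ∀ t, t ∈ TsF ↔ t ∈ TriSet n p := by
    intro t
    rw [hTsF, Finset.mem_filter, Finset.mem_powerset]
    exact ⟨fun h => h.2, fun h => ⟨Stmt0.triSet_subset_Icc h, h⟩⟩
  have hEs : ∀ e, e ∈ EsF ↔ e ∈ EdgeSet n p := by
    intro e
    rw [hEsF, Finset.mem_filter, Finset.mem_powerset]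
    refine ⟨fun h => h.2, fun h => ⟨?_, h⟩⟩
    obtain ⟨_, t, ht, het⟩ := h
    exact le_trans het (Stmt0.triSet_subset_Icc ht)
  have hedge : ∀ e ∈ EsF, ∃ a b : ℕ, a < b ∧ e = ({a, b} : Finset ℕ) ∧ 1 ≤ a ∧ b ≤ n := by
    intro e he
    obtain ⟨hcard, t, ht, het⟩ := (hEs e).mp he
    obtain ⟨x, y, hxy, rfl⟩ := Finset.card_eq_two.mp hcard
    have hsub := le_trans het (Stmt0.triSet_subset_Icc ht)
    have hx := Finset.mem_Icc.mp (hsub (Finset.mem_insert_self x {y}))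
    have hy := Finset.mem_Icc.mp (hsub (Finset.mem_insert_of_mem (Finset.mem_singleton_self y)))
    rcases lt_or_gt_of_ne hxy with h | h
    · exact ⟨x, y, h, rfl, hx.1, hy.2⟩
    · exact ⟨y, x, h, Finset.pair_comm x y, hy.1, hx.2⟩
  have hkey : ∀ e ∈ EsF, ∃ Fe : Finset (Set (ℕ × ℕ × ℝ)),
      IsCuboidPartition Fe (ActivitySpace n p e) ∧
      Fe.card ≤ (n - 1) * (TsF.filter (fun t => e ⊆ t)).card := by
    intro e he
    obtain ⟨a, b, hab, rfl, ha1, hbn⟩ := hedge e he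
    have han : a ≤ n := le_trans (le_of_lt hab) hbn
    have hb1 : 1 ≤ b := le_trans ha1 (le_of_lt hab)
    have hpab : p a ≠ p b := hgp.1 a b ha1 han hb1 hbn (Nat.ne_of_lt hab)
    have hcol : ∀ m, 1 ≤ m → m ≤ n → m ≠ a → m ≠ b →
        Stmt0.fB (p a) (p b) (p m) ≠ 0 := by
      intro m hm1 hmn hma hmb hfB0
      exact hgp.2.1 a b m ha1 han hb1 hbn hm1 hmn (Nat.ne_of_lt hab)
        (Ne.symm hma) (Ne.symm hmb)
        (Stmt0.collinear_of_fB (p a) (p b) hpab (p m) hfB0)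
    exact Stmt0.key_partition n p a b hab ha1 hbn hpab hcol TsF hTs
  refine ⟨TsF, EsF, Set.ext (fun t => by rw [Finset.mem_coe, hTs t]),
    Set.ext (fun e => by rw [Finset.mem_coe, hEs e]), ?_⟩
  set F : Finset ℕ → Finset (Set (ℕ × ℕ × ℝ)) :=
    fun e => if h : e ∈ EsF then (hkey e h).choose else ∅ with hF
  refine ⟨F, ?_, ?_⟩
  · intro e he
    rw [hF]
    simp only [dif_pos he]
    exact (hkey e he).choose_spec.1
  · have hbound : ∀ t ∈ TsF, (EsF.filter (fun e => e ⊆ t)).card ≤ 3 := by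
      intro t ht
      have hsub : EsF.filter (fun e => e ⊆ t) ⊆ t.powersetCard 2 := by
        intro e he'
        rw [Finset.mem_filter] at he'
        rw [Finset.mem_powersetCard]
        exact ⟨he'.2, ((hEs e).mp he'.1).1⟩
      have hle := Finset.card_le_card hsub
      rw [Finset.card_powersetCard] at hle
      rcases Stmt0.triSet_card ((hTs t).mp ht) with h | h <;> rw [h] at hle
      · have h32 : Nat.choose 3 2 = 3 := by decide
        omega
      · have h22 : Nat.choose 2 2 = 1 := by decide
        omega
    calc ∑ e ∈ EsF, (F e).card
        ≤ ∑ e ∈ EsF, (n - 1) * (TsF.filter (fun t => e ⊆ t)).card := by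
          apply Finset.sum_le_sum
          intro e he
          rw [hF]
          simp only [dif_pos he]
          exact (hkey e he).choose_spec.2
      _ = (n - 1) * ∑ e ∈ EsF, (TsF.filter (fun t => e ⊆ t)).card := by
          rw [Finset.mul_sum]
      _ = (n - 1) * ∑ t ∈ TsF, (EsF.filter (fun e => e ⊆ t)).card := by
          congr 1
          have h1 : ∀ e, (TsF.filter (fun t => e ⊆ t)).card
              = ∑ t ∈ TsF, if e ⊆ t then 1 else 0 := by
            intro e; rw [Finset.card_filter]
          have h2 : ∀ t, (EsF.filter (fun e => e ⊆ t)).card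
              = ∑ e ∈ EsF, if e ⊆ t then 1 else 0 := by
            intro t; rw [Finset.card_filter]
          simp only [h1, h2]
          rw [Finset.sum_comm]
      _ ≤ (n - 1) * ∑ t ∈ TsF, 3 := by
          apply Nat.mul_le_mul_left
          exact Finset.sum_le_sum hbound
      _ = 3 * (n - 1) * TsF.card := by
          rw [Finset.sum_const]
          ring
end

section
/- Let t be a triangle with vertex indices a < b < c that is a Delaunay triangle of at least one time window, let C be its open circumdisk, let i_lower = a and i_upper = c, let i_before be the largest index k < i_lower with p_k ∈ C (or 0 if none exists), and let i_after be the smallest index k > i_upper with p_k ∈ C (or n+1 if none exists). Then for all 1 ≤ i ≤ j ≤ n, t is a Delaunay triangle of the time window P_{i,j} if and only if i_before < i ≤ i_lower and i_upper ≤ j < i_after; i.e., the Delaunay activity space L^D_t is the rectangle ]i_before, i_lower] × [i_upper, i_after[. -/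
open Metric

/-- The triangle with vertex indices `a, b, c` is a Delaunay triangle of the time window
`P_{i,j}`: all vertex indices lie in `[i, j]` and the open circumdisk of the three vertices
contains no point of `P_{i,j}`. -/
def IsDelaunayTri (n : ℕ) (p : ℕ → Pt) (i j a b c : ℕ) : Prop :=
  1 ≤ i ∧ i ≤ j ∧ j ≤ n ∧ i ≤ a ∧ a ≤ j ∧ i ≤ b ∧ b ≤ j ∧ i ≤ c ∧ c ≤ j ∧
  ∃ (o : Pt) (r : ℝ), dist o (p a) = r ∧ dist o (p b) = r ∧ dist o (p c) = r ∧
    ∀ m : ℕ, i ≤ m → m ≤ j → r ≤ dist o (p m)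

lemma circum_unique {A B C : Pt} (hnc : ¬ Collinear ℝ ({A, B, C} : Set Pt))
    {o o' : Pt} {r r' : ℝ}
    (h1 : dist o A = r) (h2 : dist o B = r) (h3 : dist o C = r)
    (h1' : dist o' A = r') (h2' : dist o' B = r') (h3' : dist o' C = r') :
    o = o' ∧ r = r' := by
  have hai : AffineIndependent ℝ ![A, B, C] :=
    affineIndependent_iff_not_collinear_set.2 hnc
  set s : Affine.Simplex ℝ Pt 2 := ⟨![A, B, C], hai⟩ with hs
  have htop : affineSpan ℝ (Set.range s.points) = ⊤ := by
    rw [hai.affineSpan_eq_top_iff_card_eq_finrank_add_one]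
    simp [finrank_euclideanSpace_fin]
  have hdist : ∀ i, dist (s.points i) o = r := by
    intro i
    fin_cases i <;> simp [hs] <;> rw [dist_comm] <;> assumption
  have hdist' : ∀ i, dist (s.points i) o' = r' := by
    intro i
    fin_cases i <;> simp [hs] <;> rw [dist_comm] <;> assumption
  have ho : o = s.circumcenter :=
    s.eq_circumcenter_of_dist_eq (by rw [htop]; trivial) hdist
  have ho' : o' = s.circumcenter :=
    s.eq_circumcenter_of_dist_eq (by rw [htop]; trivial) hdist'
  have hoo : o = o' := ho.trans ho'.symm
  refine ⟨hoo, ?_⟩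
  rw [← h1, ← h1', hoo]

/-- The Delaunay activity space of a triangle `t` with vertex indices
`a < b < c`, circumcircle of center `o` and radius `r`, which is a Delaunay triangle of at
least one time window, is the rectangle `]i_before, a] × [c, i_after[`, where `i_before`
is the largest index `< a` of a point inside the circumdisk (or `0` if none) and `i_after`
is the smallest index `> c` of a point inside the circumdisk (or `n + 1` if none). -/
theorem stmt2 (n : ℕ) (p : ℕ → Pt) (hgp : GenPos n p)
    (a b c : ℕ) (ha : 1 ≤ a) (hab : a < b) (hbc : b < c) (hcn : c ≤ n)
    (o : Pt) (r : ℝ)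
    (hoa : dist o (p a) = r) (hob : dist o (p b) = r) (hoc : dist o (p c) = r)
    (hDel : ∃ i j : ℕ, IsDelaunayTri n p i j a b c)
    (ib ia : ℕ)
    (hib : (ib = 0 ∧ ∀ k : ℕ, 1 ≤ k → k < a → ¬ dist o (p k) < r) ∨
           (1 ≤ ib ∧ ib < a ∧ dist o (p ib) < r ∧
             ∀ k : ℕ, ib < k → k < a → ¬ dist o (p k) < r))
    (hia : (ia = n + 1 ∧ ∀ k : ℕ, c < k → k ≤ n → ¬ dist o (p k) < r) ∨
           (c < ia ∧ ia ≤ n ∧ dist o (p ia) < r ∧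
             ∀ k : ℕ, c < k → k < ia → ¬ dist o (p k) < r))
    (i j : ℕ) (hi : 1 ≤ i) (hij : i ≤ j) (hj : j ≤ n) :
    IsDelaunayTri n p i j a b c ↔ (ib < i ∧ i ≤ a ∧ c ≤ j ∧ j < ia) := by
  have hnc : ¬ Collinear ℝ ({p a, p b, p c} : Set Pt) :=
    hgp.2.1 a b c ha (le_trans (le_of_lt (lt_trans hab hbc)) hcn) (le_trans ha hab.le)
      (le_trans hbc.le hcn) (le_trans ha (lt_trans hab hbc).le) hcn
      hab.ne (lt_trans hab hbc).ne hbc.ne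
  -- from the witness window, points with indices in [a, c] are outside the disk
  obtain ⟨i0, j0, h0⟩ := hDel
  obtain ⟨-, -, -, hi0a, -, -, -, -, hcj0, o0, r0, ho0a, ho0b, ho0c, h0all⟩ := h0
  obtain ⟨hoo, hrr⟩ := circum_unique hnc hoa hob hoc ho0a ho0b ho0c
  have hmid : ∀ m : ℕ, a ≤ m → m ≤ c → r ≤ dist o (p m) := by
    intro m ham hmc
    rw [hoo, hrr]
    exact h0all m (le_trans hi0a ham) (le_trans hmc hcj0)
  constructor
  · rintro ⟨-, -, -, hia', -, -, -, -, hcj, o', r', ho'a, ho'b, ho'c, hall⟩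
    obtain ⟨hoo', hrr'⟩ := circum_unique hnc hoa hob hoc ho'a ho'b ho'c
    have hall' : ∀ m : ℕ, i ≤ m → m ≤ j → r ≤ dist o (p m) := by
      intro m h1 h2; rw [hoo', hrr']; exact hall m h1 h2
    refine ⟨?_, hia', hcj, ?_⟩
    · by_contra hcon
      push_neg at hcon
      rcases hib with ⟨hib0, -⟩ | ⟨hib1, hiba, hibin, -⟩
      · omega
      · exact absurd hibin (not_lt.2 (hall' ib hcon (by omega)))
    · by_contra hcon
      push_neg at hcon
      rcases hia with ⟨hian, -⟩ | ⟨hcia, hian, hiain, -⟩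
      · omega
      · have : i ≤ ia := le_trans hia' (le_trans hab.le (le_trans hbc.le hcia.le))
        exact absurd hiain (not_lt.2 (hall' ia this hcon))
  · rintro ⟨h1, h2, h3, h4⟩
    refine ⟨hi, hij, hj, h2, le_trans (lt_trans hab hbc).le h3, le_trans h2 hab.le,
      le_trans hbc.le h3, le_trans h2 (lt_trans hab hbc).le, h3, o, r, hoa, hob, hoc, ?_⟩
    intro m him hmj
    rcases lt_or_ge m a with hma | ham
    · rcases hib with ⟨-, hall⟩ | ⟨-, -, -, hall⟩
      · exact not_lt.1 (hall m (le_trans hi him) hma)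
      · exact not_lt.1 (hall m (lt_of_lt_of_le h1 him) hma)
    · rcases le_or_gt m c with hmc | hcm
      · exact hmid m ham hmc
      · rcases hia with ⟨-, hall⟩ | ⟨-, -, -, hall⟩
        · exact not_lt.1 (hall m hcm (le_trans hmj hj))
        · exact not_lt.1 (hall m hcm (lt_of_le_of_lt hmj h4))
end

section
/- Let Q be a finite set of points in ℝ² and let p, q ∈ Q be distinct. Then there is NO open disk with p and q on its boundary containing no point of Q if and only if there exist points x, y ∈ Q \ {p, q} (possibly x = y) such that every open disk with p and q on its boundary contains x or contains y in its interior. -/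
open Metric

/- Auxiliary machinery -/

noncomputable def mkPt (a b : ℝ) : Pt := WithLp.toLp 2 ![a, b]

@[simp] lemma mkPt_zero (a b : ℝ) : mkPt a b 0 = a := rfl
@[simp] lemma mkPt_one (a b : ℝ) : mkPt a b 1 = b := rfl

lemma dist_sq (z w : Pt) : dist z w ^ 2 = (z 0 - w 0)^2 + (z 1 - w 1)^2 := by
  rw [EuclideanSpace.dist_eq, Real.sq_sqrt (by positivity)]
  simp [Fin.sum_univ_two, Real.dist_eq, sq_abs]

lemma dist_lt_dist_iff_sq (c z w : Pt) : dist c z < dist c w ↔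
    dist c z ^ 2 < dist c w ^ 2 :=
  (pow_lt_pow_iff_left₀ dist_nonneg dist_nonneg two_ne_zero).symm

lemma dist_eq_dist_iff_sq (c z w : Pt) : dist c z = dist c w ↔
    dist c z ^ 2 = dist c w ^ 2 := by
  constructor
  · intro h; rw [h]
  · intro h
    have h1 : Real.sqrt (dist c z ^ 2) = Real.sqrt (dist c w ^ 2) := by rw [h]
    rwa [Real.sqrt_sq dist_nonneg, Real.sqrt_sq dist_nonneg] at h1

lemma pt_ext (z w : Pt) (h0 : z 0 = w 0) (h1 : z 1 = w 1) : z = w := by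
  ext i; fin_cases i <;> assumption

/-- Covering lemma over ℝ: if a finite family of affine functions is such that
for every `t` some member is negative at `t`, then two members suffice. -/
lemma cover_lemma {ι : Type*} [DecidableEq ι] (S : Finset ι) (A B : ι → ℝ)
    (h : ∀ t : ℝ, ∃ i ∈ S, A i + t * B i < 0) :
    ∃ i ∈ S, ∃ j ∈ S, ∀ t : ℝ, A i + t * B i < 0 ∨ A j + t * B j < 0 := by
  by_cases hc : ∃ i ∈ S, B i = 0 ∧ A i < 0
  · obtain ⟨i, hi, hB, hA⟩ := hc
    exact ⟨i, hi, i, hi, fun t => Or.inl (by rw [hB]; simpa)⟩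
  push_neg at hc
  -- S is nonempty
  obtain ⟨i₀, hi₀, _⟩ := h 0
  have hT : (S.image (fun i => -A i / B i)).Nonempty := ⟨_, Finset.mem_image_of_mem _ hi₀⟩
  set t₀ : ℝ := (S.image (fun i => -A i / B i)).min' hT - 1 with ht₀
  obtain ⟨x₀, hx₀S, hx₀⟩ := h t₀
  have ht₀le : t₀ < -A x₀ / B x₀ := by
    have := Finset.min'_le _ _ (Finset.mem_image_of_mem (fun i => -A i / B i) hx₀S)
    linarith
  have hBx₀ : 0 < B x₀ := by
    rcases lt_trichotomy (B x₀) 0 with hlt | heq | hgt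
    · exfalso
      have h1 : -A x₀ / B x₀ * B x₀ < t₀ * B x₀ := by
        exact mul_lt_mul_of_neg_right ht₀le hlt
      rw [div_mul_cancel₀ _ (ne_of_lt hlt)] at h1
      linarith
    · exfalso; have := hc x₀ hx₀S heq; rw [heq] at hx₀; linarith
    · exact hgt
  -- the set of "positive slope" members
  set D : Finset ι := S.filter (fun i => 0 < B i) with hD
  have hx₀D : x₀ ∈ D := Finset.mem_filter.mpr ⟨hx₀S, hBx₀⟩
  have hRne : (D.image (fun i => -A i / B i)).Nonempty := ⟨_, Finset.mem_image_of_mem _ hx₀D⟩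
  set a : ℝ := (D.image (fun i => -A i / B i)).max' hRne with ha
  obtain ⟨x, hxD, hxa⟩ := Finset.mem_image.mp (Finset.max'_mem _ hRne)
  have hxS : x ∈ S := (Finset.mem_filter.mp hxD).1
  have hBx : 0 < B x := (Finset.mem_filter.mp hxD).2
  have Hx : ∀ t < a, A x + t * B x < 0 := by
    intro t ht
    have h1 : t * B x < a * B x := mul_lt_mul_of_pos_right ht hBx
    have h2 : a * B x = -A x := by
      rw [ha, ← hxa, div_mul_cancel₀ _ (ne_of_gt hBx)]
    linarith
  obtain ⟨y, hyS, hy⟩ := h a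
  have hBy : B y < 0 := by
    rcases lt_trichotomy (B y) 0 with hlt | heq | hgt
    · exact hlt
    · exfalso; have := hc y hyS heq; rw [heq] at hy; linarith
    · exfalso
      have hyD : y ∈ D := Finset.mem_filter.mpr ⟨hyS, hgt⟩
      have hle : -A y / B y ≤ a :=
        Finset.le_max' _ _ (Finset.mem_image_of_mem (fun i => -A i / B i) hyD)
      have : -A y / B y * B y ≤ a * B y := mul_le_mul_of_nonneg_right hle (le_of_lt hgt)
      rw [div_mul_cancel₀ _ (ne_of_gt hgt)] at this
      linarith
  refine ⟨x, hxS, y, hyS, fun t => ?_⟩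
  rcases lt_or_ge t a with hlt | hge
  · exact Or.inl (Hx t hlt)
  · right
    have : t * B y ≤ a * B y := by
      exact mul_le_mul_of_nonpos_right hge (le_of_lt hBy)
    linarith

/-- There is no empty open disk with `p` and `q` on its boundary iff
there are two points `x, y ∈ Q \ {p, q}` such that every open disk through `p` and `q`
contains `x` or `y` in its interior. -/
theorem stmt3 (Q : Set Pt) (hQ : Q.Finite) (p q : Pt)
    (hp : p ∈ Q) (hq : q ∈ Q) (hpq : p ≠ q) :
    (¬ ∃ (c : Pt) (r : ℝ), dist c p = r ∧ dist c q = r ∧ ∀ x ∈ Q, r ≤ dist c x) ↔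
      (∃ x ∈ Q \ ({p, q} : Set Pt), ∃ y ∈ Q \ ({p, q} : Set Pt),
        ∀ (c : Pt) (r : ℝ), dist c p = r → dist c q = r →
          (dist c x < r ∨ dist c y < r)) := by
  classical
  -- coordinates
  set w0 : ℝ := q 0 - p 0 with hw0
  set w1 : ℝ := q 1 - p 1 with hw1
  set m0 : ℝ := (p 0 + q 0) / 2 with hm0
  set m1 : ℝ := (p 1 + q 1) / 2 with hm1
  have hw : w0 ^ 2 + w1 ^ 2 ≠ 0 := by
    intro hz
    apply hpq
    apply pt_ext
    · nlinarith [sq_nonneg w0, sq_nonneg w1]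
    · nlinarith [sq_nonneg w0, sq_nonneg w1]
  -- the parametrized family of centers
  set C : ℝ → Pt := fun t => mkPt (m0 - t * w1) (m1 + t * w0) with hC
  have hC0 : ∀ t, C t 0 = m0 - t * w1 := fun t => rfl
  have hC1 : ∀ t, C t 1 = m1 + t * w0 := fun t => rfl
  -- every C t is on the bisector
  have hCbis : ∀ t, dist (C t) p = dist (C t) q := by
    intro t
    rw [dist_eq_dist_iff_sq, dist_sq, dist_sq, hC0, hC1, hm0, hm1, hw0, hw1]
    ring
  -- every point on the bisector is some C t
  have hbisC : ∀ c : Pt, dist c p = dist c q → ∃ t, c = C t := by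
    intro c hcd
    rw [dist_eq_dist_iff_sq, dist_sq, dist_sq] at hcd
    refine ⟨(-(c 0 - m0) * w1 + (c 1 - m1) * w0) / (w0 ^ 2 + w1 ^ 2), ?_⟩
    have key : (c 0 - m0) * w0 + (c 1 - m1) * w1 = 0 := by
      simp only [hm0, hm1, hw0, hw1]; linear_combination hcd / 2
    apply pt_ext
    · rw [hC0]
      field_simp
      linear_combination w0 * key
    · rw [hC1]
      field_simp
      linear_combination w1 * key
  -- affine coefficients for membership in the open disk centered at C t
  set A : Pt → ℝ := fun z => (m0 - z 0)^2 + (m1 - z 1)^2 - (m0 - p 0)^2 - (m1 - p 1)^2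
    with hA
  set B : Pt → ℝ := fun z => -2 * w1 * (p 0 - z 0) + 2 * w0 * (p 1 - z 1) with hB
  have hmem : ∀ (t : ℝ) (z : Pt), dist (C t) z < dist (C t) p ↔ A z + t * B z < 0 := by
    intro t z
    rw [dist_lt_dist_iff_sq, dist_sq, dist_sq, hC0, hC1]
    have hid : ((m0 - t * w1 - z 0) ^ 2 + (m1 + t * w0 - z 1) ^ 2) -
        ((m0 - t * w1 - p 0) ^ 2 + (m1 + t * w0 - p 1) ^ 2) = A z + t * B z := by
      simp only [hA, hB]; ring
    constructor <;> intro h <;> linarith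
  constructor
  · -- forward direction
    intro hno
    push_neg at hno
    have hQ' : (Q \ ({p, q} : Set Pt)).Finite := hQ.subset Set.diff_subset
    set S : Finset Pt := hQ'.toFinset with hS
    have hScov : ∀ t : ℝ, ∃ z ∈ S, A z + t * B z < 0 := by
      intro t
      obtain ⟨z, hzQ, hzlt⟩ := hno (C t) (dist (C t) p) rfl (hCbis t).symm
      have hzp : z ≠ p := by
        intro h; rw [h] at hzlt; exact lt_irrefl _ hzlt
      have hzq : z ≠ q := by
        intro h; rw [h, ← hCbis t] at hzlt; exact lt_irrefl _ hzlt
      refine ⟨z, ?_, (hmem t z).mp hzlt⟩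
      rw [hS, Set.Finite.mem_toFinset]
      exact ⟨hzQ, by simp [Set.mem_insert_iff, hzp, hzq]⟩
    obtain ⟨x, hxS, y, hyS, hcov⟩ := cover_lemma S A B hScov
    rw [hS, Set.Finite.mem_toFinset] at hxS hyS
    refine ⟨x, hxS, y, hyS, ?_⟩
    intro c r hcp hcq
    obtain ⟨t, rfl⟩ := hbisC c (by rw [hcp, hcq])
    rcases hcov t with h | h
    · left; rw [← hcp]; exact (hmem t x).mpr h
    · right; rw [← hcp]; exact (hmem t y).mpr h
  · -- backward direction
    rintro ⟨x, hx, y, hy, hcov⟩ ⟨c, r, hcp, hcq, hempty⟩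
    rcases hcov c r hcp hcq with h | h
    · exact absurd (hempty x hx.1) (not_le.mpr h)
    · exact absurd (hempty y hy.1) (not_le.mpr h)
end

section
/- Let Q be a finite set of points in ℝ² and let p, q ∈ Q be distinct. If every point of Q \ {p, q} lies strictly on one common side of the line through p and q (i.e., there is a unit vector u with ⟪u, q − p⟫ = 0 and ⟪r − p, u⟫ < 0 for all r ∈ Q \ {p, q}), then there exists an open disk with p and q on its boundary containing no point of Q; i.e., every convex hull edge {p, q} of Q is a Delaunay edge of Q. -/
open Metric

/-- If all points of `Q \ {p, q}` lie strictly on one common side of the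
line through `p` and `q`, then there is an open disk with `p` and `q` on its boundary
containing no point of `Q`: convex hull edges are Delaunay edges. -/
theorem stmt7 (Q : Set Pt) (hQ : Q.Finite) (p q : Pt)
    (hp : p ∈ Q) (hq : q ∈ Q) (hpq : p ≠ q)
    (u : Pt) (hu : ‖u‖ = 1) (horth : (inner ℝ u (q - p) : ℝ) = 0)
    (hside : ∀ r ∈ Q \ ({p, q} : Set Pt), (inner ℝ (r - p) u : ℝ) < 0) :
    ∃ (c : Pt) (r : ℝ), dist c p = r ∧ dist c q = r ∧ ∀ x ∈ Q, r ≤ dist c x := by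
  classical
  set m : Pt := (1/2 : ℝ) • (p + q) with hm
  have hmp : m - p = (1/2 : ℝ) • (q - p) := by rw [hm]; module
  have hmq : m - q = (-(1/2) : ℝ) • (q - p) := by rw [hm]; module
  have hup : (inner ℝ (m - p) u : ℝ) = 0 := by
    rw [hmp, real_inner_smul_left, real_inner_comm, horth, mul_zero]
  have huq : (inner ℝ (m - q) u : ℝ) = 0 := by
    rw [hmq, real_inner_smul_left, real_inner_comm, horth, mul_zero]
  have hnorm_eq : ‖m - p‖ = ‖m - q‖ := by
    rw [hmp, hmq, norm_smul, norm_smul]; norm_num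
  set f : Pt → ℝ := fun x => (‖m - p‖^2 - ‖m - x‖^2) / (2 * (-(inner ℝ (x - p) u : ℝ)))
    with hf
  obtain ⟨T, hT⟩ := ((hQ.diff : (Q \ ({p, q} : Set Pt)).Finite).image f).bddAbove
  set t : ℝ := max T 0 with ht
  have ht0 : 0 ≤ t := le_max_right _ _
  set c : Pt := m + t • u with hc
  have hcp : c - p = (m - p) + t • u := by rw [hc]; abel
  have hcq : c - q = (m - q) + t • u := by rw [hc]; abel
  have hsq : ∀ y : Pt, ‖(m - y) + t • u‖^2
      = ‖m - y‖^2 + 2 * (t * (inner ℝ (m - y) u : ℝ)) + t^2 := by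
    intro y
    rw [norm_add_sq_real, real_inner_smul_right, norm_smul, hu, mul_one,
      Real.norm_eq_abs, abs_of_nonneg ht0]
    try ring
  have hnormeq : ‖(m - q) + t • u‖ = ‖(m - p) + t • u‖ := by
    have h2 : ‖(m - q) + t • u‖^2 = ‖(m - p) + t • u‖^2 := by
      rw [hsq, hsq, hup, huq, hnorm_eq]
    calc ‖(m - q) + t • u‖ = Real.sqrt (‖(m - q) + t • u‖^2) :=
          (Real.sqrt_sq (norm_nonneg _)).symm
      _ = Real.sqrt (‖(m - p) + t • u‖^2) := by rw [h2]
      _ = ‖(m - p) + t • u‖ := Real.sqrt_sq (norm_nonneg _)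
  have heq : dist c q = dist c p := by
    rw [dist_eq_norm, dist_eq_norm, hcp, hcq, hnormeq]
  refine ⟨c, dist c p, rfl, heq, ?_⟩
  · intro x hx
    by_cases hxp : x = p
    · subst hxp; exact le_refl _
    by_cases hxq : x = q
    · rw [hxq, heq]
    · have hxS : x ∈ Q \ ({p, q} : Set Pt) := ⟨hx, by simp [hxp, hxq]⟩
      have hneg : (inner ℝ (x - p) u : ℝ) < 0 := hside x hxS
      have hden : 0 < 2 * (-(inner ℝ (x - p) u : ℝ)) := by linarith
      have hfx : f x ≤ t := le_trans (hT ⟨x, hxS, rfl⟩) (le_max_left _ _)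
      have hkey : ‖m - p‖^2 - ‖m - x‖^2 ≤ t * (2 * (-(inner ℝ (x - p) u : ℝ))) := by
        rw [hf] at hfx
        have := (div_le_iff₀ hden).mp hfx
        linarith
      have hinner : (inner ℝ (m - x) u : ℝ) = (inner ℝ (m - p) u : ℝ) - (inner ℝ (x - p) u : ℝ) := by
        have : m - x = (m - p) - (x - p) := by abel
        rw [this, inner_sub_left]
      have hsqle : ‖(m - p) + t • u‖^2 ≤ ‖(m - x) + t • u‖^2 := by
        rw [hsq, hsq, hup, hinner, hup]
        nlinarith
      have hcx : c - x = (m - x) + t • u := by rw [hc]; abel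
      rw [dist_eq_norm, dist_eq_norm, hcp, hcx]
      calc ‖(m - p) + t • u‖ = Real.sqrt (‖(m - p) + t • u‖^2) :=
            (Real.sqrt_sq (norm_nonneg _)).symm
        _ ≤ Real.sqrt (‖(m - x) + t • u‖^2) := Real.sqrt_le_sqrt hsqle
        _ = ‖(m - x) + t • u‖ := Real.sqrt_sq (norm_nonneg _)
end

section
/- Let p, q, x ∈ ℝ² with x not on the line through p and q, let u be the unit vector with ⟪u, q − p⟫ = 0 and ⟪x − p, u⟫ > 0, and let c_f be the circumcenter of p, q, x (the unique point equidistant from p, q, x). Then for every point c on the perpendicular bisector of p and q with ⟪c − c_f, u⟫ > 0, the point x lies strictly inside the open disk centered at c passing through p and q, i.e., dist(x, c) < dist(p, c). Hence the circumcenter of a coface bounds on one side the centers of disks through p and q that are empty of x. -/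
open Metric

lemma bisector_inner (a p q : Pt) (h : dist a p = dist a q) :
    (inner ℝ a (q - p) : ℝ) = (‖q‖^2 - ‖p‖^2) / 2 := by
  have h1 : ‖a - p‖^2 = ‖a - q‖^2 := by
    rw [← dist_eq_norm, ← dist_eq_norm, h]
  rw [norm_sub_sq_real, norm_sub_sq_real] at h1
  rw [inner_sub_right]
  linarith

/-- For `x` off the line through `p` and `q`, `u` the unit normal of the
line pointing towards `x`, and `c_f` the circumcenter of `p, q, x`: every center `c`
on the perpendicular bisector of `p` and `q` lying strictly beyond `c_f` in direction `u`
yields an open disk through `p` and `q` that contains `x` strictly in its interior. -/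
theorem stmt8 (p q x : Pt) (hpq : p ≠ q)
    (hx : ¬ Collinear ℝ ({p, q, x} : Set Pt))
    (u : Pt) (hu : ‖u‖ = 1) (horth : (inner ℝ u (q - p) : ℝ) = 0)
    (hside : (0 : ℝ) < inner ℝ (x - p) u)
    (cf : Pt) (hcf1 : dist cf p = dist cf q) (hcf2 : dist cf p = dist cf x)
    (c : Pt) (hc : dist c p = dist c q) (hcu : (0 : ℝ) < inner ℝ (c - cf) u) :
    dist x c < dist p c := by
  have hqp : q - p ≠ 0 := sub_ne_zero.mpr (Ne.symm hpq)
  have hu0 : u ≠ 0 := by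
    intro h; rw [h, norm_zero] at hu; norm_num at hu
  set v := c - cf with hv
  have hvqp : (inner ℝ v (q - p) : ℝ) = 0 := by
    have h1 := bisector_inner c p q hc
    have h2 := bisector_inner cf p q hcf1
    rw [hv, inner_sub_left, h1, h2]; ring
  -- v is a multiple of u
  set K : Submodule ℝ Pt := ℝ ∙ (q - p) with hK
  have hdim : Module.finrank ℝ Pt = 2 := by
    simp [Pt, finrank_euclideanSpace]
  have hKd : Module.finrank ℝ K = 1 := finrank_span_singleton hqp
  have hKo : Module.finrank ℝ Kᗮ = 1 := by
    have h := Submodule.finrank_add_finrank_orthogonal (K := K)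
    rw [hdim, hKd] at h
    omega
  have memKo : ∀ w : Pt, (inner ℝ w (q - p) : ℝ) = 0 → w ∈ Kᗮ := by
    intro w hw
    rw [Submodule.mem_orthogonal]
    intro y hy
    obtain ⟨t, rfl⟩ := Submodule.mem_span_singleton.mp hy
    rw [inner_smul_left, real_inner_comm, hw]
    simp
  have huK : u ∈ Kᗮ := memKo u horth
  have hspan : (ℝ ∙ u) = Kᗮ := by
    apply Submodule.eq_of_le_of_finrank_eq
    · rw [Submodule.span_singleton_le_iff_mem]; exact huK
    · rw [finrank_span_singleton hu0, hKo]
  have hvK : v ∈ (ℝ ∙ u) := hspan ▸ memKo v hvqp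
  obtain ⟨t, ht⟩ := Submodule.mem_span_singleton.mp hvK
  have htv : (inner ℝ v u : ℝ) = t := by
    rw [← ht, real_inner_smul_left, real_inner_self_eq_norm_sq, hu]
    ring
  have ht0 : 0 < t := by rw [← htv]; exact hcu
  have hkey : (0 : ℝ) < inner ℝ v (x - p) := by
    rw [← ht, real_inner_smul_left, real_inner_comm]
    exact mul_pos ht0 hside
  -- main computation
  have hxcf : ‖x - cf‖ = ‖p - cf‖ := by
    rw [← dist_eq_norm, ← dist_eq_norm, dist_comm x cf, dist_comm p cf, ← hcf2]
  have hsq : ‖x - c‖^2 < ‖p - c‖^2 := by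
    have e1 : x - c = (x - cf) - v := by rw [hv]; abel
    have e2 : p - c = (p - cf) - v := by rw [hv]; abel
    rw [e1, e2, norm_sub_sq_real ((x : Pt) - cf) v, norm_sub_sq_real ((p : Pt) - cf) v, hxcf]
    have : (inner ℝ (x - cf) v : ℝ) - inner ℝ (p - cf) v = inner ℝ v (x - p) := by
      rw [← inner_sub_left, real_inner_comm]
      congr 1; abel
    nlinarith [hkey]
  have h1 : dist x c < dist p c := by
    rw [dist_eq_norm, dist_eq_norm]
    exact lt_of_pow_lt_pow_left₀ 2 (norm_nonneg _) (by nlinarith [norm_nonneg (x - c), norm_nonneg (p - c)])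
  exact h1
end

section
/- Let p, q, x ∈ ℝ² with x not on the line through p and q, let u be the unit vector with ⟪u, q − p⟫ = 0 and ⟪x − p, u⟫ > 0 (so that H = {y : ⟪y − p, u⟫ > 0} is the open halfplane containing x), and let c_f be the circumcenter of p, q, x. If c_f ∉ H (i.e., ⟪c_f − p, u⟫ ≤ 0), then every point c ∈ H on the perpendicular bisector of p and q satisfies dist(x, c) < dist(p, c); in other words, if the circumcenter of the front coface of the edge {p, q} lies behind the edge, then no open disk through p and q centered in front of the edge is empty of x, so the edge admits no empty α-ball centered in front for any α. -/
open Metric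

/-- In the plane, a vector orthogonal to a nonzero vector `w` is a multiple of
the unit vector `u` orthogonal to `w`. -/
lemma key_lemma (u w d : Pt) (hu : ‖u‖ = 1) (hw : w ≠ 0)
    (huw : (inner ℝ u w : ℝ) = 0) (hdw : (inner ℝ d w : ℝ) = 0) :
    d = (inner ℝ d u : ℝ) • u := by
  have hnorm : u 0 ^ 2 + u 1 ^ 2 = 1 := by
    have := real_inner_self_eq_norm_sq u
    rw [hu] at this
    simp only [PiLp.inner_apply, RCLike.inner_apply, conj_trivial, Fin.sum_univ_two] at this
    nlinarith [this]
  simp only [PiLp.inner_apply, RCLike.inner_apply, conj_trivial, Fin.sum_univ_two] at huw hdw ⊢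
  have hw' : w 0 ≠ 0 ∨ w 1 ≠ 0 := by
    by_contra h
    push_neg at h
    apply hw
    ext i
    fin_cases i <;> simp [h.1, h.2]
  have hcross : d 0 * u 1 - d 1 * u 0 = 0 := by
    rcases hw' with h | h
    · have h0 : (d 0 * u 1 - d 1 * u 0) * w 0 = 0 := by linear_combination u 1 * hdw - d 1 * huw
      rcases mul_eq_zero.mp h0 with h0 | h0
      · exact h0
      · exact absurd h0 h
    · have h0 : (d 0 * u 1 - d 1 * u 0) * w 1 = 0 := by linear_combination d 0 * huw - u 0 * hdw
      rcases mul_eq_zero.mp h0 with h0 | h0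
      · exact h0
      · exact absurd h0 h
  ext i
  fin_cases i
  · show d 0 = (u 0 * d 0 + u 1 * d 1) * u 0
    linear_combination - d 0 * hnorm + u 1 * hcross
  · show d 1 = (u 0 * d 0 + u 1 * d 1) * u 1
    linear_combination - d 1 * hnorm - u 0 * hcross

/-- With `H = {y | ⟪y - p, u⟫ > 0}` the open halfplane containing `x`
and `c_f` the circumcenter of `p, q, x`: if `c_f ∉ H`, then every point `c ∈ H` on the
perpendicular bisector of `p` and `q` satisfies `dist x c < dist p c`, i.e. no open disk
through `p` and `q` centered in front of the edge is empty of `x`. -/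
theorem stmt9 (p q x : Pt) (hpq : p ≠ q)
    (hx : ¬ Collinear ℝ ({p, q, x} : Set Pt))
    (u : Pt) (hu : ‖u‖ = 1) (horth : (inner ℝ u (q - p) : ℝ) = 0)
    (hside : (0 : ℝ) < inner ℝ (x - p) u)
    (cf : Pt) (hcf1 : dist cf p = dist cf q) (hcf2 : dist cf p = dist cf x)
    (hbehind : (inner ℝ (cf - p) u : ℝ) ≤ 0)
    (c : Pt) (hc : dist c p = dist c q) (hcH : (0 : ℝ) < inner ℝ (c - p) u) :
    dist x c < dist p c := by
  have hw : q - p ≠ 0 := sub_ne_zero.mpr (Ne.symm hpq)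
  -- c - cf is orthogonal to q - p
  have e1 : ‖c - p‖ ^ 2 = ‖c - q‖ ^ 2 := by
    rw [dist_eq_norm, dist_eq_norm] at hc; rw [hc]
  have e2 : ‖cf - p‖ ^ 2 = ‖cf - q‖ ^ 2 := by
    rw [dist_eq_norm, dist_eq_norm] at hcf1; rw [hcf1]
  have hdw : (inner ℝ (c - cf) (q - p) : ℝ) = 0 := by
    simp only [norm_sub_sq_real] at e1 e2
    simp only [inner_sub_left, inner_sub_right]
    linear_combination (e1 - e2) / 2
  -- decompose c - cf along u
  have hdec : c - cf = (inner ℝ (c - cf) u : ℝ) • u :=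
    key_lemma u (q - p) (c - cf) hu hw horth hdw
  have hs : (0 : ℝ) < inner ℝ (c - cf) u := by
    have : (inner ℝ (c - cf) u : ℝ) = inner ℝ (c - p) u - inner ℝ (cf - p) u := by
      rw [← inner_sub_left]; congr 1; abel
    rw [this]; linarith
  -- inner (x - p) (c - cf) > 0
  have hpos : (0 : ℝ) < inner ℝ (x - p) (c - cf) := by
    rw [hdec, real_inner_smul_right]
    exact mul_pos hs hside
  -- squared-distance comparison
  have hA : ‖cf - p‖ ^ 2 = ‖cf - x‖ ^ 2 := by
    rw [dist_eq_norm, dist_eq_norm] at hcf2; rw [hcf2]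
  have h1 : ‖x - c‖ ^ 2 - ‖p - c‖ ^ 2 = -2 * inner ℝ (x - p) (c - cf) := by
    have hc1 : (inner ℝ cf x : ℝ) = inner ℝ x cf := real_inner_comm _ _
    have hc2 : (inner ℝ cf p : ℝ) = inner ℝ p cf := real_inner_comm _ _
    simp only [norm_sub_sq_real] at hA ⊢
    simp only [inner_sub_left, inner_sub_right]
    linear_combination -hA + 2 * hc1 - 2 * hc2
  have h2 : ‖x - c‖ ^ 2 < ‖p - c‖ ^ 2 := by nlinarith
  rw [dist_eq_norm, dist_eq_norm]
  exact lt_of_pow_lt_pow_left₀ 2 (norm_nonneg _) h2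
end

section
/- Let Q be a finite set of points in ℝ² with no four points cocircular, let p, q ∈ Q be distinct, and let H be one of the two open halfplanes bounded by the line through p and q. Then there is at most one point x ∈ Q ∩ H such that the open circumdisk of p, q, x contains no point of Q; i.e., in every time window a Delaunay edge has at most one coface on each of its sides. -/
open Metric

lemma inner_coord (a b : Pt) : (inner ℝ a b : ℝ) = a 0 * b 0 + a 1 * b 1 := by
  simp [PiLp.inner_apply, Fin.sum_univ_two, RCLike.inner_apply]; ring

lemma dist_sq_coord (a b : Pt) :
    dist a b ^ 2 = (a 0 - b 0) ^ 2 + (a 1 - b 1) ^ 2 := by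
  rw [EuclideanSpace.dist_eq, Real.sq_sqrt (by positivity)]
  simp [Fin.sum_univ_two, Real.dist_eq, sq_abs]

lemma norm_sq_coord (a : Pt) : ‖a‖ ^ 2 = a 0 ^ 2 + a 1 ^ 2 := by
  rw [← real_inner_self_eq_norm_sq, inner_coord]; ring

lemma det_zero (u0 u1 w0 w1 v0 v1 : ℝ) (hw : w0 ≠ 0 ∨ w1 ≠ 0)
    (huw : u0 * w0 + u1 * w1 = 0) (hvw : v0 * w0 + v1 * w1 = 0) :
    u0 * v1 - u1 * v0 = 0 := by
  have hdet0 : (u0 * v1 - u1 * v0) * w0 = 0 := by linear_combination v1 * huw - u1 * hvw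
  have hdet1 : (u0 * v1 - u1 * v0) * w1 = 0 := by linear_combination -v0 * huw + u0 * hvw
  rcases hw with h | h
  · rcases mul_eq_zero.mp hdet0 with h' | h'
    · exact h'
    · exact absurd h' h
  · rcases mul_eq_zero.mp hdet1 with h' | h'
    · exact h'
    · exact absurd h' h

/-- If no four points of `Q` are cocircular, then for each open side of the
line through distinct `p, q ∈ Q` there is at most one point `x ∈ Q` on that side such that
the open circumdisk of `p, q, x` contains no point of `Q`: a Delaunay edge has at most one
coface on each side. -/
theorem stmt12 (Q : Set Pt) (hQ : Q.Finite)
    (hcocirc : ∀ a ∈ Q, ∀ b ∈ Q, ∀ c ∈ Q, ∀ d ∈ Q,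
      a ≠ b → a ≠ c → a ≠ d → b ≠ c → b ≠ d → c ≠ d →
      ¬ ∃ (o : Pt) (r : ℝ), dist o a = r ∧ dist o b = r ∧ dist o c = r ∧ dist o d = r)
    (p q : Pt) (hp : p ∈ Q) (hq : q ∈ Q) (hpq : p ≠ q)
    (u : Pt) (hu : ‖u‖ = 1) (horth : (inner ℝ u (q - p) : ℝ) = 0) :
    {x : Pt | x ∈ Q ∧ (0 : ℝ) < inner ℝ (x - p) u ∧
      ∃ (o : Pt) (r : ℝ), dist o p = r ∧ dist o q = r ∧ dist o x = r ∧
        ∀ y ∈ Q, r ≤ dist o y}.Subsingleton := by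
  rintro x1 ⟨hx1Q, hs1, o1, r1, hop1, hoq1, hox1, hmin1⟩
    x2 ⟨hx2Q, hs2, o2, r2, hop2, hoq2, hox2, hmin2⟩
  by_contra hne
  -- basic nonnegativity
  have hr1 : 0 ≤ r1 := hop1 ▸ dist_nonneg
  have hr2 : 0 ≤ r2 := hop2 ▸ dist_nonneg
  -- coordinate versions of circle equations
  have E1 : (o1 0 - p 0) ^ 2 + (o1 1 - p 1) ^ 2 = r1 ^ 2 := by
    rw [← dist_sq_coord, hop1]
  have E2 : (o1 0 - q 0) ^ 2 + (o1 1 - q 1) ^ 2 = r1 ^ 2 := by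
    rw [← dist_sq_coord, hoq1]
  have E3 : (o1 0 - x1 0) ^ 2 + (o1 1 - x1 1) ^ 2 = r1 ^ 2 := by
    rw [← dist_sq_coord, hox1]
  have F1 : (o2 0 - p 0) ^ 2 + (o2 1 - p 1) ^ 2 = r2 ^ 2 := by
    rw [← dist_sq_coord, hop2]
  have F2 : (o2 0 - q 0) ^ 2 + (o2 1 - q 1) ^ 2 = r2 ^ 2 := by
    rw [← dist_sq_coord, hoq2]
  have F3 : (o2 0 - x2 0) ^ 2 + (o2 1 - x2 1) ^ 2 = r2 ^ 2 := by
    rw [← dist_sq_coord, hox2]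
  -- emptiness inequalities
  have I1 : r1 ^ 2 ≤ (o1 0 - x2 0) ^ 2 + (o1 1 - x2 1) ^ 2 := by
    have h := hmin1 x2 hx2Q
    have h2 : r1 ^ 2 ≤ dist o1 x2 ^ 2 := pow_le_pow_left₀ hr1 h 2
    rwa [dist_sq_coord] at h2
  have I2 : r2 ^ 2 ≤ (o2 0 - x1 0) ^ 2 + (o2 1 - x1 1) ^ 2 := by
    have h := hmin2 x1 hx1Q
    have h2 : r2 ^ 2 ≤ dist o2 x1 ^ 2 := pow_le_pow_left₀ hr2 h 2
    rwa [dist_sq_coord] at h2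
  -- unit vector and orthogonality in coordinates
  have hu2 : u 0 ^ 2 + u 1 ^ 2 = 1 := by rw [← norm_sq_coord, hu]; norm_num
  have horth' : u 0 * (q 0 - p 0) + u 1 * (q 1 - p 1) = 0 := by
    have h := horth
    rw [inner_coord] at h
    simpa using h
  have hs1' : 0 < (x1 0 - p 0) * u 0 + (x1 1 - p 1) * u 1 := by
    have h := hs1
    rw [inner_coord] at h
    simpa using h
  have hs2' : 0 < (x2 0 - p 0) * u 0 + (x2 1 - p 1) * u 1 := by
    have h := hs2
    rw [inner_coord] at h
    simpa using h
  -- q - p is nonzero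
  have hw : q 0 - p 0 ≠ 0 ∨ q 1 - p 1 ≠ 0 := by
    by_contra h
    push_neg at h
    apply hpq
    ext i
    fin_cases i
    · show p 0 = q 0; linarith [h.1]
    · show p 1 = q 1; linarith [h.2]
  -- o1 - o2 is orthogonal to q - p
  have hvw : (o1 0 - o2 0) * (q 0 - p 0) + (o1 1 - o2 1) * (q 1 - p 1) = 0 := by
    linear_combination (E1 - E2 - F1 + F2) / 2
  -- so o1 - o2 is parallel to u
  have hdet : u 0 * (o1 1 - o2 1) - u 1 * (o1 0 - o2 0) = 0 :=
    det_zero _ _ _ _ _ _ hw horth' hvw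
  obtain ⟨c, hc⟩ : ∃ c : ℝ, c = (o1 0 - o2 0) * u 0 + (o1 1 - o2 1) * u 1 := ⟨_, rfl⟩
  have hv0 : o1 0 - o2 0 = c * u 0 := by
    rw [hc]; linear_combination (-(o1 0 - o2 0)) * hu2 - u 1 * hdet
  have hv1 : o1 1 - o2 1 = c * u 1 := by
    rw [hc]; linear_combination (-(o1 1 - o2 1)) * hu2 + u 0 * hdet
  -- key inequalities on c
  have key1 : (o2 0 - x1 0) ^ 2 + (o2 1 - x1 1) ^ 2 - r2 ^ 2 =
      ((o1 0 - x1 0) ^ 2 + (o1 1 - x1 1) ^ 2 - r1 ^ 2)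
      + 2 * ((x1 0 - p 0) * (o1 0 - o2 0) + (x1 1 - p 1) * (o1 1 - o2 1))
      + ((o2 0 - p 0) ^ 2 + (o2 1 - p 1) ^ 2 - r2 ^ 2)
      - ((o1 0 - p 0) ^ 2 + (o1 1 - p 1) ^ 2 - r1 ^ 2) := by ring
  have key2 : (o1 0 - x2 0) ^ 2 + (o1 1 - x2 1) ^ 2 - r1 ^ 2 =
      ((o2 0 - x2 0) ^ 2 + (o2 1 - x2 1) ^ 2 - r2 ^ 2)
      - 2 * ((x2 0 - p 0) * (o1 0 - o2 0) + (x2 1 - p 1) * (o1 1 - o2 1))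
      + ((o1 0 - p 0) ^ 2 + (o1 1 - p 1) ^ 2 - r1 ^ 2)
      - ((o2 0 - p 0) ^ 2 + (o2 1 - p 1) ^ 2 - r2 ^ 2) := by ring
  have h1 : 0 ≤ (x1 0 - p 0) * (o1 0 - o2 0) + (x1 1 - p 1) * (o1 1 - o2 1) := by
    linarith [I2, E3, E1, F1, key1]
  have h2 : (x2 0 - p 0) * (o1 0 - o2 0) + (x2 1 - p 1) * (o1 1 - o2 1) ≤ 0 := by
    linarith [I1, F3, E1, F1, key2]
  rw [hv0, hv1] at h1 h2
  have h1' : 0 ≤ c * ((x1 0 - p 0) * u 0 + (x1 1 - p 1) * u 1) := by linarith [h1, (by ring : (x1 0 - p 0) * (c * u 0) + (x1 1 - p 1) * (c * u 1) = c * ((x1 0 - p 0) * u 0 + (x1 1 - p 1) * u 1))]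
  have h2' : c * ((x2 0 - p 0) * u 0 + (x2 1 - p 1) * u 1) ≤ 0 := by linarith [h2, (by ring : (x2 0 - p 0) * (c * u 0) + (x2 1 - p 1) * (c * u 1) = c * ((x2 0 - p 0) * u 0 + (x2 1 - p 1) * u 1))]
  have hcpos : 0 ≤ c := by
    by_contra hlt
    push_neg at hlt
    have := mul_neg_of_neg_of_pos hlt hs1'
    linarith [h1']
  have hcneg : c ≤ 0 := by
    by_contra hlt
    push_neg at hlt
    have := mul_pos hlt hs2'
    linarith [h2']
  have hc0 : c = 0 := le_antisymm hcneg hcpos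
  rw [hc0] at hv0 hv1
  have ho0 : o1 0 = o2 0 := by linarith [hv0]
  have ho1 : o1 1 = o2 1 := by linarith [hv1]
  -- hence r1 = r2 and x2 lies on the first circle
  have hrr : r1 ^ 2 = r2 ^ 2 := by rw [ho0, ho1] at E1; linarith [E1, F1]
  have hdx2sq : dist o1 x2 ^ 2 = r1 ^ 2 := by
    rw [dist_sq_coord, ho0, ho1]; linarith [F3, hrr]
  have hdx2 : dist o1 x2 = r1 := by
    calc dist o1 x2 = √(dist o1 x2 ^ 2) := (Real.sqrt_sq dist_nonneg).symm
    _ = √(r1 ^ 2) := by rw [hdx2sq]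
    _ = r1 := Real.sqrt_sq hr1
  -- the four points are distinct
  have hpx1 : p ≠ x1 := by
    rintro rfl
    simp at hs1
  have hpx2 : p ≠ x2 := by
    rintro rfl
    simp at hs2
  have hqx1 : q ≠ x1 := by
    rintro rfl
    rw [real_inner_comm, horth] at hs1
    exact lt_irrefl _ hs1
  have hqx2 : q ≠ x2 := by
    rintro rfl
    rw [real_inner_comm, horth] at hs2
    exact lt_irrefl _ hs2
  exact hcocirc p hp q hq x1 hx1Q x2 hx2Q hpq hpx1 hpx2 hqx1 hqx2 hne
    ⟨o1, r1, hop1, hoq1, hox1, hdx2⟩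
end

section
/- Let p_1, …, p_n be a point sequence in ℝ² in general position, let i ≤ a < b ≤ j < n, and suppose the triangle t with vertices p_a, p_b, p_k (i ≤ k ≤ j) is a Delaunay triangle of the time window P_{i,j} but not of P_{i,j+1} (equivalently, p_{j+1} lies in the open circumdisk of t). If m is any index with i ≤ m ≤ j+1 such that p_m lies on the same side of the line through p_a and p_b as p_k and the triangle with vertices p_a, p_b, p_m is a Delaunay triangle of P_{i,j+1}, then m = j+1; i.e., when a point insertion destroys a coface of a surviving Delaunay edge e, the new coface of e on that side has the newly inserted point as its highest-index vertex. -/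
open Metric

/-- In the plane, any vector orthogonal to a nonzero vector `v` is a multiple of a
given unit vector `u` orthogonal to `v`. -/
lemma aux_perp (v u w : Pt) (hv : v ≠ 0) (hu : ‖u‖ = 1)
    (huv : (inner ℝ u v : ℝ) = 0) (hwv : (inner ℝ w v : ℝ) = 0) :
    ∃ c : ℝ, w = c • u := by
  refine ⟨(inner ℝ w u : ℝ), ?_⟩
  set z : Pt := w - (inner ℝ w u : ℝ) • u with hz
  have hun : u ≠ 0 := by
    intro h; rw [h, norm_zero] at hu; norm_num at hu
  have hzu : (inner ℝ z u : ℝ) = 0 := by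
    simp only [hz, inner_sub_left, real_inner_smul_left]
    rw [real_inner_self_eq_norm_sq, hu]; ring
  have hzv : (inner ℝ z v : ℝ) = 0 := by
    simp only [hz, inner_sub_left, real_inner_smul_left, hwv, huv]; ring
  have hz0 : z = 0 := by
    by_contra hz0
    have hli : LinearIndependent ℝ ![v, u, z] := by
      apply linearIndependent_of_ne_zero_of_inner_eq_zero
      · intro i
        fin_cases i
        · exact hv
        · exact hun
        · exact hz0
      · intro a b hab
        fin_cases a <;> fin_cases b
        · exact absurd rfl hab
        · show (inner ℝ v u : ℝ) = 0
          rw [real_inner_comm]; exact huv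
        · show (inner ℝ v z : ℝ) = 0
          rw [real_inner_comm]; exact hzv
        · exact huv
        · exact absurd rfl hab
        · show (inner ℝ u z : ℝ) = 0
          rw [real_inner_comm]; exact hzu
        · exact hzv
        · exact hzu
        · exact absurd rfl hab
    have hcard := hli.fintype_card_le_finrank
    rw [finrank_euclideanSpace_fin] at hcard
    simp at hcard
  have : w = (inner ℝ w u : ℝ) • u := by
    have := sub_eq_zero.mp hz0
    exact this
  exact this

/-- Let the triangle with vertices `p a, p b, p k` (a coface of the edge
`e = {p a, p b}`) be a Delaunay triangle of `P_{i,j}` (circumcircle `(o, r)` empty of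
points of the window) destroyed by the insertion of `p (j+1)` (which lies in the open
circumdisk). If `p m` lies on the same side of the line through `p a` and `p b` as `p k`
and the triangle `p a, p b, p m` is a Delaunay triangle of `P_{i,j+1}`, then `m = j + 1`:
the new coface has the newly inserted point as its highest-index vertex. -/
theorem stmt13 (n : ℕ) (p : ℕ → Pt) (hgp : GenPos n p)
    (i j a b k : ℕ) (hi : 1 ≤ i) (hia : i ≤ a) (hab : a < b) (hbj : b ≤ j) (hjn : j < n)
    (hik : i ≤ k) (hkj : k ≤ j) (hka : k ≠ a) (hkb : k ≠ b)
    (o : Pt) (r : ℝ)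
    (hoa : dist o (p a) = r) (hob : dist o (p b) = r) (hok : dist o (p k) = r)
    (hDel : ∀ m : ℕ, i ≤ m → m ≤ j → r ≤ dist o (p m))
    (hdestroy : dist o (p (j + 1)) < r)
    (m : ℕ) (him : i ≤ m) (hmj : m ≤ j + 1) (hma : m ≠ a) (hmb : m ≠ b)
    (hside : ∃ u : Pt, ‖u‖ = 1 ∧ (inner ℝ u (p b - p a) : ℝ) = 0 ∧
      (0 : ℝ) < inner ℝ (p k - p a) u ∧ (0 : ℝ) < inner ℝ (p m - p a) u)
    (hDelm : ∃ (o' : Pt) (r' : ℝ), dist o' (p a) = r' ∧ dist o' (p b) = r' ∧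
      dist o' (p m) = r' ∧ ∀ m' : ℕ, i ≤ m' → m' ≤ j + 1 → r' ≤ dist o' (p m')) :
    m = j + 1 := by
  by_contra hne
  have hmj' : m ≤ j := by omega
  obtain ⟨u, hu1, huv, hku, hmu⟩ := hside
  obtain ⟨o', r', hoa', hob', hom', hDel'⟩ := hDelm
  -- basic facts
  have hab' : p a ≠ p b :=
    hgp.1 a b (le_trans hi hia) (by omega) (by omega) (by omega) (by omega)
  have hvne : p b - p a ≠ 0 := sub_ne_zero.mpr (Ne.symm hab')
  have hr0 : 0 ≤ r := hoa ▸ dist_nonneg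
  have hr0' : 0 ≤ r' := hoa' ▸ dist_nonneg
  -- the difference of centers is orthogonal to p b - p a
  have key : ∀ x : Pt, ‖x - o‖^2 - ‖x - o'‖^2
      = ‖o‖^2 - ‖o'‖^2 + 2 * (inner ℝ x (o' - o) : ℝ) := by
    intro x
    rw [@norm_sub_sq_real, @norm_sub_sq_real, inner_sub_right]
    ring
  have hdista : ∀ (q : Pt) (c : Pt) (s : ℝ), dist c q = s → ‖q - c‖^2 = s^2 := by
    intro q c s h
    rw [← h, dist_comm, dist_eq_norm]
  have hga : ‖p a - o‖^2 - ‖p a - o'‖^2 = r^2 - r'^2 := by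
    rw [hdista _ _ _ hoa, hdista _ _ _ hoa']
  have hgb : ‖p b - o‖^2 - ‖p b - o'‖^2 = r^2 - r'^2 := by
    rw [hdista _ _ _ hob, hdista _ _ _ hob']
  have hperp : (inner ℝ (o' - o) (p b - p a) : ℝ) = 0 := by
    have h1 := key (p a)
    have h2 := key (p b)
    rw [hga] at h1; rw [hgb] at h2
    have : (inner ℝ (p b) (o' - o) : ℝ) = inner ℝ (p a) (o' - o) := by linarith
    rw [real_inner_comm, inner_sub_left, this]; ring
  obtain ⟨c, hc⟩ := aux_perp (p b - p a) u (o' - o) hvne hu1 huv hperp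
  -- signed power difference formula
  have hformula : ∀ x : Pt, ‖x - o‖^2 - ‖x - o'‖^2 - (r^2 - r'^2)
      = 2 * c * (inner ℝ (x - p a) u : ℝ) := by
    intro x
    have h1 := key x
    have h2 := key (p a)
    rw [hga] at h2
    have : ‖x - o‖^2 - ‖x - o'‖^2 - (r^2 - r'^2)
        = 2 * (inner ℝ (x - p a) (o' - o) : ℝ) := by
      rw [inner_sub_left]; linarith
    rw [this, hc, real_inner_smul_right]; ring
  -- evaluate at p k : nonpositive
  have hk1 : ‖p k - o‖^2 = r^2 := hdista _ _ _ hok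
  have hk2 : r'^2 ≤ ‖p k - o'‖^2 := by
    have h := hDel' k hik (by omega)
    rw [dist_comm, dist_eq_norm] at h
    exact pow_le_pow_left₀ hr0' h 2
  have hcle : c ≤ 0 := by
    have h := hformula (p k)
    have hle : 2 * c * (inner ℝ (p k - p a) u : ℝ) ≤ 0 := by
      rw [← h, hk1]; linarith
    nlinarith [hku]
  -- evaluate at p m : nonnegative
  have hm1 : ‖p m - o'‖^2 = r'^2 := hdista _ _ _ hom'
  have hm2 : r^2 ≤ ‖p m - o‖^2 := by
    have h := hDel m him hmj'
    rw [dist_comm, dist_eq_norm] at h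
    exact pow_le_pow_left₀ hr0 h 2
  have hcge : 0 ≤ c := by
    have h := hformula (p m)
    have hle : 0 ≤ 2 * c * (inner ℝ (p m - p a) u : ℝ) := by
      rw [← h, hm1]; linarith
    nlinarith [hmu]
  have hc0 : c = 0 := le_antisymm hcle hcge
  have hoo : o' = o := by
    have : o' - o = 0 := by rw [hc, hc0, zero_smul]
    exact sub_eq_zero.mp this
  have hrr : r' = r := by rw [← hoa, ← hoa', hoo]
  have := hDel' (j+1) (by omega) (by omega)
  rw [hoo, hrr] at this
  linarith
end
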